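/- arXiv:1603.06122 — 2 statements merged into one kernel-verified Lean document; each statement's English description precedes it below -/
import Mathlib

section
/- Let (f,C) be a low-defect pair of degree r > 0 and let 0 ≤ s < δ(f,C) be a real number. Then there exists a number K such that whenever δ_{f,C}(k₁,…,k_r) < s, there is some index i with xᵢ minimal in the nesting order of f and kᵢ ≤ K. -/
/-- `CpxW n k` : the positive integer `n` can be written using exactly `k` ones,
with an arbitrary combination of additions and multiplications. -/
inductive CpxW : ℕ → ℕ → Prop
  | one : CpxW 1 1
  | add {a b m n : ℕ} : CpxW a m → CpxW b n → CpxW (a + b) (m + n)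
  | mul {a b m n : ℕ} : CpxW a m → CpxW b n → CpxW (a * b) (m + n)

/-- The integer complexity `‖n‖`: the least number of 1's needed to write `n`
using additions and multiplications. -/
noncomputable def cpx (n : ℕ) : ℕ := sInf {k | CpxW n k}

/-- The defect `δ(n) = ‖n‖ - 3 log₃ n`. -/
noncomputable def defect (n : ℕ) : ℝ := (cpx n : ℝ) - 3 * Real.logb 3 (n : ℝ)

/-- `LDP r f C` : `(f, C)` is a low-defect pair of degree `r`; here a low-defect
polynomial of degree `r` is written in the variables `X 0, …, X (r-1)`. -/
inductive LDP : ℕ → MvPolynomial ℕ ℤ → ℕ → Prop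
  | const (k C : ℕ) (hk : 0 < k) (hC : cpx k ≤ C) :
      LDP 0 (MvPolynomial.C (k : ℤ)) C
  | mul {r₁ r₂ : ℕ} {f₁ f₂ : MvPolynomial ℕ ℤ} {C₁ C₂ : ℕ} :
      LDP r₁ f₁ C₁ → LDP r₂ f₂ C₂ →
      LDP (r₁ + r₂) (f₁ * MvPolynomial.rename (· + r₁) f₂) (C₁ + C₂)
  | step {r : ℕ} {f : MvPolynomial ℕ ℤ} {C : ℕ} (c D : ℕ) (hc : 0 < c) (hD : cpx c ≤ D) :
      LDP r f C → LDP (r + 1) (f * MvPolynomial.X r + MvPolynomial.C (c : ℤ)) (C + D)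

/-- A low-defect polynomial: the first component of some low-defect pair. -/
def LowDefectPoly (f : MvPolynomial ℕ ℤ) : Prop := ∃ r C, LDP r f C

/-- The leading coefficient of a low-defect polynomial of degree `r`:
the coefficient of `x₁ ⋯ x_r`. -/
noncomputable def leadCoeff (r : ℕ) (f : MvPolynomial ℕ ℤ) : ℤ :=
  MvPolynomial.coeff (∑ i ∈ Finset.range r, Finsupp.single i 1) f

/-- The defect `δ(f,C) = C - 3 log₃ a` of a low-defect pair of degree `r`,
where `a` is the leading coefficient. -/
noncomputable def pairDft (r : ℕ) (f : MvPolynomial ℕ ℤ) (C : ℕ) : ℝ :=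
  (C : ℝ) - 3 * Real.logb 3 ((leadCoeff r f : ℤ) : ℝ)

/-- `f(3^{k₁}, …, 3^{k_r})` for a polynomial of degree `r`. -/
noncomputable def eval3 (r : ℕ) (f : MvPolynomial ℕ ℤ) (k : ℕ → ℕ) : ℤ :=
  MvPolynomial.eval (fun i => if i < r then (3 : ℤ) ^ (k i) else 1) f

/-- `δ_{f,C}(k₁,…,k_r) = C + 3(k₁+⋯+k_r) - 3 log₃ f(3^{k₁},…,3^{k_r})`. -/
noncomputable def dftF (r : ℕ) (f : MvPolynomial ℕ ℤ) (C : ℕ) (k : ℕ → ℕ) : ℝ :=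
  (C : ℝ) + 3 * (∑ i ∈ Finset.range r, (k i : ℝ))
    - 3 * Real.logb 3 ((eval3 r f k : ℤ) : ℝ)

/-- The nesting order: `NestLe f i j` means `xᵢ ⪯ xⱼ`, i.e. every monomial of `f`
divisible by `xᵢ` is divisible by `xⱼ`. -/
def NestLe (f : MvPolynomial ℕ ℤ) (i j : ℕ) : Prop :=
  ∀ m ∈ f.support, m i ≠ 0 → m j ≠ 0

/-- `xᵢ` is a variable of (the degree-`r` polynomial) `f` that is minimal with
respect to the nesting order. -/
def IsMinVar (r : ℕ) (f : MvPolynomial ℕ ℤ) (i : ℕ) : Prop :=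
  i < r ∧ ∀ j < r, NestLe f j i → NestLe f i j

/-- Substituting `3^k` for the variable `xᵢ` of `f`, renumbering the later
variables down by one. -/
noncomputable def truncAt (f : MvPolynomial ℕ ℤ) (i k : ℕ) : MvPolynomial ℕ ℤ :=
  MvPolynomial.aeval (fun j => if j < i then MvPolynomial.X j
    else if j = i then MvPolynomial.C ((3 : ℤ) ^ k) else MvPolynomial.X (j - 1)) f

/-- A direct truncation of a "pair with degree" `(r, f, C)`: substitute `3^k`
into a variable of `f` minimal in the nesting order. -/
def DirectTrunc (a b : ℕ × MvPolynomial ℕ ℤ × ℕ) : Prop :=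
  ∃ i k : ℕ, a.1 = b.1 + 1 ∧ IsMinVar a.1 a.2.1 i ∧
    b.2.1 = truncAt a.2.1 i k ∧ b.2.2 = a.2.2 + 3 * k

/-- `n` is a leader: either `3 ∤ n`, or `3 ∣ n` and `‖n‖ < ‖n/3‖ + 3`. -/
def IsLeader (n : ℕ) : Prop := 0 < n ∧ (3 ∣ n → cpx n < cpx (n / 3) + 3)

/-- `(f, C)` (of degree `r`) efficiently 3-represents `n`. -/
def EffRep (r : ℕ) (f : MvPolynomial ℕ ℤ) (C : ℕ) (n : ℕ) : Prop :=
  ∃ k : ℕ → ℕ, (n : ℤ) = eval3 r f k ∧ cpx n = C + 3 * ∑ i ∈ Finset.range r, k i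

/-- The number of `∗`-entries (free coordinates) of `p` among `0, …, r-1`. -/
def starCount (r : ℕ) (p : ℕ → Option ℕ) : ℕ :=
  ((Finset.range r).filter (fun i => p i = none)).card

/-- The 3-substitution of a tuple `p ∈ (ℤ≥0 ∪ {∗})^r` into `f`: substitute
`3^{kᵢ}` for `xᵢ` whenever `p i = some kᵢ`, renumbering the surviving variables
in increasing order. -/
noncomputable def subst3 (f : MvPolynomial ℕ ℤ) (p : ℕ → Option ℕ) : MvPolynomial ℕ ℤ :=
  MvPolynomial.aeval (fun j =>
    match p j with
    | some k => MvPolynomial.C ((3 : ℤ) ^ k)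
    | none => MvPolynomial.X (((Finset.range j).filter (fun i => p i = none)).card)) f

/-- The insertion map `ι` associated to `p`: inserts the arguments into the
coordinates of `p` equal to `∗`. -/
def iotaMap (p : ℕ → Option ℕ) (ℓ : ℕ → ℕ) : ℕ → ℕ := fun j =>
  match p j with
  | some k => k
  | none => ℓ (((Finset.range j).filter (fun i => p i = none)).card)
section Dev
open MvPolynomial Finsupp Finset

lemma mapDomain_shift_apply (m : ℕ →₀ ℕ) (t i : ℕ) :
    Finsupp.mapDomain (· + t) m i = if t ≤ i then m (i - t) else 0 := by
  split_ifs with h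
  · have : i = (i - t) + t := (Nat.sub_add_cancel h).symm
    conv_lhs => rw [this]
    rw [Finsupp.mapDomain_apply (add_left_injective t)]
  · apply Finsupp.mapDomain_notin_range
    rintro ⟨a, ha⟩; simp only at ha; omega

noncomputable def Lead (r : ℕ) : ℕ →₀ ℕ := ∑ i ∈ Finset.range r, Finsupp.single i 1

lemma Lead_apply (r i : ℕ) : Lead r i = if i < r then 1 else 0 := by
  rw [Lead, Finset.sum_apply']
  simp [Finsupp.single_apply, Finset.sum_ite_eq]

lemma Lead_support (r : ℕ) : (Lead r).support = Finset.range r := by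
  ext i; simp [Finsupp.mem_support_iff, Lead_apply]

lemma Lead_add (t r₂ : ℕ) :
    Lead (t + r₂) = Lead t + Finsupp.mapDomain (· + t) (Lead r₂) := by
  ext i
  simp only [Finsupp.add_apply, Lead_apply, mapDomain_shift_apply]
  split_ifs <;> omega

lemma Lead_succ (r : ℕ) : Lead (r + 1) = Lead r + Finsupp.single r 1 := by
  ext i
  simp only [Finsupp.add_apply, Lead_apply, Finsupp.single_apply]
  split_ifs <;> omega

lemma coeff_mul_disjoint {f g : MvPolynomial ℕ ℤ} {t : ℕ}
    (hf : ∀ m ∈ f.support, ∀ i, t ≤ i → m i = 0)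
    (hg : ∀ m ∈ g.support, ∀ i, i < t → m i = 0)
    {m₁ m₂ : ℕ →₀ ℕ} (h₁ : ∀ i, t ≤ i → m₁ i = 0) (h₂ : ∀ i, i < t → m₂ i = 0) :
    MvPolynomial.coeff (m₁ + m₂) (f * g) = coeff m₁ f * coeff m₂ g := by
  rw [MvPolynomial.coeff_mul]
  apply Finset.sum_eq_single (m₁, m₂)
  · rintro ⟨a, b⟩ hab hne
    simp only [Finset.HasAntidiagonal.mem_antidiagonal] at hab
    by_contra hc
    have ha : a ∈ f.support := by
      rw [MvPolynomial.mem_support_iff]; intro h; apply hc; simp [h]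
    have hb : b ∈ g.support := by
      rw [MvPolynomial.mem_support_iff]; intro h; apply hc; simp [h]
    have hae : a = m₁ := by
      ext i
      have := DFunLike.congr_fun hab i
      simp only [Finsupp.add_apply] at this
      rcases lt_or_ge i t with hi | hi
      · have := hg b hb i hi; have := h₂ i hi; omega
      · rw [hf a ha i hi, h₁ i hi]
    have : b = m₂ := by
      apply add_left_cancel (a := m₁)
      rw [← hae, hab, hae]
    exact hne (by rw [hae, this])
  · intro h
    exfalso; exact h (Finset.HasAntidiagonal.mem_antidiagonal.2 rfl)

lemma mem_support_mul_iff {f g : MvPolynomial ℕ ℤ} {t : ℕ}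
    (hf : ∀ m ∈ f.support, ∀ i, t ≤ i → m i = 0)
    (hg : ∀ m ∈ g.support, ∀ i, i < t → m i = 0) (m : ℕ →₀ ℕ) :
    m ∈ (f * g).support ↔ ∃ m₁ ∈ f.support, ∃ m₂ ∈ g.support, m = m₁ + m₂ := by
  classical
  constructor
  · intro hm
    have := MvPolynomial.support_mul f g hm
    rw [Finset.mem_add] at this
    obtain ⟨m₁, h₁, m₂, h₂, rfl⟩ := this
    exact ⟨m₁, h₁, m₂, h₂, rfl⟩
  · rintro ⟨m₁, h₁, m₂, h₂, rfl⟩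
    rw [MvPolynomial.mem_support_iff,
      coeff_mul_disjoint hf hg (fun i hi => hf m₁ h₁ i hi) (fun i hi => hg m₂ h₂ i hi)]
    exact mul_ne_zero (MvPolynomial.mem_support_iff.1 h₁) (MvPolynomial.mem_support_iff.1 h₂)

/-- Bundled structural invariant of low-defect polynomials. -/
structure Good (r : ℕ) (f : MvPolynomial ℕ ℤ) : Prop where
  pos : ∀ m ∈ f.support, 0 < MvPolynomial.coeff m f
  expl : ∀ m ∈ f.support, ∀ i, m i ≤ 1
  deg : ∀ m ∈ f.support, ∀ i, r ≤ i → m i = 0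
  lead : Lead r ∈ f.support
  konst : (0 : ℕ →₀ ℕ) ∈ f.support
  miss : ∀ m ∈ f.support, m ≠ Lead r → ∃ i, IsMinVar r f i ∧ m i = 0

/-- Existence of a minimal variable. -/
lemma exists_isMinVar (r : ℕ) (hr : 0 < r) (f : MvPolynomial ℕ ℤ) :
    ∃ i, IsMinVar r f i := by
  classical
  obtain ⟨i, hi, hmin⟩ := Finset.exists_min_image (Finset.range r)
    (fun i => ((Finset.range r).filter (fun j => NestLe f j i)).card)
    ⟨0, Finset.mem_range.2 hr⟩
  rw [Finset.mem_range] at hi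
  refine ⟨i, hi, fun j hj hji => ?_⟩
  by_contra hij
  have hsub : (Finset.range r).filter (fun l => NestLe f l j) ⊂
      (Finset.range r).filter (fun l => NestLe f l i) := by
    constructor
    · intro l hl
      rw [Finset.mem_filter] at hl ⊢
      exact ⟨hl.1, fun m hm h => hji m hm (hl.2 m hm h)⟩
    · intro hcon
      have : i ∈ (Finset.range r).filter (fun l => NestLe f l i) :=
        Finset.mem_filter.2 ⟨Finset.mem_range.2 hi, fun m _ h => h⟩
      have := Finset.mem_filter.1 (hcon this)
      exact hij this.2
  have := Finset.card_lt_card hsub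
  have := hmin j (Finset.mem_range.2 hj)
  omega

end Dev
section Dev2
open MvPolynomial Finsupp Finset

variable {f g : MvPolynomial ℕ ℤ} {t : ℕ}
variable (hfdeg : ∀ m ∈ f.support, ∀ i, t ≤ i → m i = 0)
variable (hgdeg : ∀ m ∈ g.support, ∀ i, i < t → m i = 0)

include hfdeg hgdeg

lemma nestle_mul_low (hgne : g.support.Nonempty) {i j : ℕ} (hi : i < t) (hj : j < t) :
    NestLe (f * g) j i ↔ NestLe f j i := by
  constructor
  · intro h m₁ hm₁ hmj
    obtain ⟨m₂, hm₂⟩ := hgne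
    have hmem : m₁ + m₂ ∈ (f * g).support :=
      (mem_support_mul_iff hfdeg hgdeg _).2 ⟨m₁, hm₁, m₂, hm₂, rfl⟩
    have h2j : m₂ j = 0 := hgdeg m₂ hm₂ j hj
    have h2i : m₂ i = 0 := hgdeg m₂ hm₂ i hi
    have := h (m₁ + m₂) hmem (by simp [Finsupp.add_apply, h2j, hmj])
    simpa [Finsupp.add_apply, h2i] using this
  · intro h m hm hmj
    obtain ⟨m₁, h₁, m₂, h₂, rfl⟩ := (mem_support_mul_iff hfdeg hgdeg _).1 hm
    have h2j : m₂ j = 0 := hgdeg m₂ h₂ j hj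
    have h2i : m₂ i = 0 := hgdeg m₂ h₂ i hi
    have h1j : m₁ j ≠ 0 := by simpa [Finsupp.add_apply, h2j] using hmj
    have := h m₁ h₁ h1j
    simp [Finsupp.add_apply, h2i, this]

lemma nestle_mul_high (hfne : f.support.Nonempty) {i j : ℕ} (hi : t ≤ i) (hj : t ≤ j) :
    NestLe (f * g) j i ↔ NestLe g j i := by
  constructor
  · intro h m₂ hm₂ hmj
    obtain ⟨m₁, hm₁⟩ := hfne
    have hmem : m₁ + m₂ ∈ (f * g).support :=
      (mem_support_mul_iff hfdeg hgdeg _).2 ⟨m₁, hm₁, m₂, hm₂, rfl⟩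
    have h1j : m₁ j = 0 := hfdeg m₁ hm₁ j hj
    have h1i : m₁ i = 0 := hfdeg m₁ hm₁ i hi
    have := h (m₁ + m₂) hmem (by simp [Finsupp.add_apply, h1j, hmj])
    simpa [Finsupp.add_apply, h1i] using this
  · intro h m hm hmj
    obtain ⟨m₁, h₁, m₂, h₂, rfl⟩ := (mem_support_mul_iff hfdeg hgdeg _).1 hm
    have h1j : m₁ j = 0 := hfdeg m₁ h₁ j hj
    have h1i : m₁ i = 0 := hfdeg m₁ h₁ i hi
    have h2j : m₂ j ≠ 0 := by simpa [Finsupp.add_apply, h1j] using hmj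
    have := h m₂ h₂ h2j
    simp [Finsupp.add_apply, h1i, this]

lemma not_nestle_mul_cross_high_low {i j : ℕ} (hi : i < t)
    (hfc : (0 : ℕ →₀ ℕ) ∈ f.support) (hj : ∃ m₂ ∈ g.support, m₂ j ≠ 0) :
    ¬ NestLe (f * g) j i := by
  intro h
  obtain ⟨m₂, hm₂, hm₂j⟩ := hj
  have hmem : (0 : ℕ →₀ ℕ) + m₂ ∈ (f * g).support :=
    (mem_support_mul_iff hfdeg hgdeg _).2 ⟨0, hfc, m₂, hm₂, rfl⟩
  have := h _ hmem (by simpa [Finsupp.add_apply] using hm₂j)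
  have h2i : m₂ i = 0 := hgdeg m₂ hm₂ i hi
  simp [Finsupp.add_apply, h2i] at this

lemma not_nestle_mul_cross_low_high {i j : ℕ} (hi : t ≤ i)
    (hgc : (0 : ℕ →₀ ℕ) ∈ g.support) (hj : ∃ m₁ ∈ f.support, m₁ j ≠ 0) :
    ¬ NestLe (f * g) j i := by
  intro h
  obtain ⟨m₁, hm₁, hm₁j⟩ := hj
  have hmem : m₁ + (0 : ℕ →₀ ℕ) ∈ (f * g).support :=
    (mem_support_mul_iff hfdeg hgdeg _).2 ⟨m₁, hm₁, 0, hgc, rfl⟩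
  have := h _ hmem (by simpa [Finsupp.add_apply] using hm₁j)
  have h1i : m₁ i = 0 := hfdeg m₁ hm₁ i hi
  simp [Finsupp.add_apply, h1i] at this

end Dev2

section Dev3
open MvPolynomial Finsupp Finset

/-- Support of a shifted rename. -/
lemma mem_support_rename_shift {f₂ : MvPolynomial ℕ ℤ} {t : ℕ} (m : ℕ →₀ ℕ) :
    m ∈ (MvPolynomial.rename (· + t) f₂).support ↔
      ∃ d ∈ f₂.support, m = Finsupp.mapDomain (· + t) d := by
  classical
  rw [MvPolynomial.support_rename_of_injective (add_left_injective t)]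
  simp only [Finset.mem_image]
  constructor
  · rintro ⟨d, hd, rfl⟩; exact ⟨d, hd, rfl⟩
  · rintro ⟨d, hd, rfl⟩; exact ⟨d, hd, rfl⟩

lemma coeff_rename_shift {f₂ : MvPolynomial ℕ ℤ} {t : ℕ} (d : ℕ →₀ ℕ) :
    MvPolynomial.coeff (Finsupp.mapDomain (· + t) d) (MvPolynomial.rename (· + t) f₂)
      = MvPolynomial.coeff d f₂ :=
  MvPolynomial.coeff_rename_mapDomain _ (add_left_injective t) _ _

lemma nestle_rename_shift {f₂ : MvPolynomial ℕ ℤ} {t : ℕ} {i j : ℕ} :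
    NestLe (MvPolynomial.rename (· + t) f₂) (j + t) (i + t) ↔ NestLe f₂ j i := by
  constructor
  · intro h d hd hdj
    have := h _ ((mem_support_rename_shift _).2 ⟨d, hd, rfl⟩)
      (by rw [Finsupp.mapDomain_apply (add_left_injective t)]; exact hdj)
    rwa [Finsupp.mapDomain_apply (add_left_injective t)] at this
  · intro h m hm hmj
    obtain ⟨d, hd, rfl⟩ := (mem_support_rename_shift _).1 hm
    rw [Finsupp.mapDomain_apply (add_left_injective t)] at hmj ⊢
    exact h d hd hmj

end Dev3
section Dev4
open MvPolynomial Finsupp Finset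

variable {f₁ f₂ : MvPolynomial ℕ ℤ} {t r₂ : ℕ}

lemma good_gdeg_low (G₂ : Good r₂ f₂) :
    ∀ m ∈ (MvPolynomial.rename (· + t) f₂).support, ∀ i, i < t → m i = 0 := by
  intro m hm i hi
  obtain ⟨d, _, rfl⟩ := (mem_support_rename_shift m).1 hm
  rw [mapDomain_shift_apply]
  simp [Nat.not_le.2 hi]

lemma good_gdeg_high (G₂ : Good r₂ f₂) :
    ∀ m ∈ (MvPolynomial.rename (· + t) f₂).support, ∀ i, t + r₂ ≤ i → m i = 0 := by
  intro m hm i hi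
  obtain ⟨d, hd, rfl⟩ := (mem_support_rename_shift m).1 hm
  rw [mapDomain_shift_apply]
  split_ifs with h
  · exact G₂.deg d hd _ (by omega)
  · rfl

lemma good_gkonst (G₂ : Good r₂ f₂) :
    (0 : ℕ →₀ ℕ) ∈ (MvPolynomial.rename (· + t) f₂).support :=
  (mem_support_rename_shift 0).2 ⟨0, G₂.konst, by rw [Finsupp.mapDomain_zero]⟩

lemma good_glead (G₂ : Good r₂ f₂) :
    Finsupp.mapDomain (· + t) (Lead r₂) ∈ (MvPolynomial.rename (· + t) f₂).support :=
  (mem_support_rename_shift _).2 ⟨Lead r₂, G₂.lead, rfl⟩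

lemma isMinVar_mul_left (G₁ : Good t f₁) (G₂ : Good r₂ f₂) {i : ℕ}
    (h : IsMinVar t f₁ i) :
    IsMinVar (t + r₂) (f₁ * MvPolynomial.rename (· + t) f₂) i := by
  have hfdeg := G₁.deg
  have hgdeg := good_gdeg_low (t := t) G₂
  refine ⟨lt_of_lt_of_le h.1 (Nat.le_add_right _ _), fun j hj hnest => ?_⟩
  rcases lt_or_ge j t with hjt | hjt
  · rw [nestle_mul_low hfdeg hgdeg ⟨0, good_gkonst G₂⟩ h.1 hjt] at hnest
    rw [nestle_mul_low hfdeg hgdeg ⟨0, good_gkonst G₂⟩ hjt h.1]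
    exact h.2 j hjt hnest
  · exfalso
    refine not_nestle_mul_cross_high_low hfdeg hgdeg h.1 G₁.konst
      ⟨Finsupp.mapDomain (· + t) (Lead r₂), good_glead G₂, ?_⟩ hnest
    rw [mapDomain_shift_apply, if_pos hjt, Lead_apply, if_pos (by omega)]
    exact one_ne_zero

lemma isMinVar_mul_right (G₁ : Good t f₁) (G₂ : Good r₂ f₂) {i : ℕ}
    (h : IsMinVar r₂ f₂ i) :
    IsMinVar (t + r₂) (f₁ * MvPolynomial.rename (· + t) f₂) (i + t) := by
  have hfdeg := G₁.deg
  have hgdeg := good_gdeg_low (t := t) G₂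
  have hi2 := h.1
  refine ⟨by omega, fun j hj hnest => ?_⟩
  rcases lt_or_ge j t with hjt | hjt
  · exfalso
    refine not_nestle_mul_cross_low_high hfdeg hgdeg (Nat.le_add_left _ _)
      (good_gkonst G₂) ⟨Lead t, G₁.lead, ?_⟩ hnest
    rw [Lead_apply, if_pos hjt]; exact one_ne_zero
  · have hjeq : j = (j - t) + t := by omega
    rw [hjeq] at hnest ⊢
    rw [nestle_mul_high hfdeg hgdeg ⟨0, G₁.konst⟩ (by omega) (by omega)] at hnest
    rw [nestle_mul_high hfdeg hgdeg ⟨0, G₁.konst⟩ (by omega) (by omega)]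
    rw [nestle_rename_shift] at hnest
    rw [nestle_rename_shift]
    exact h.2 _ (by omega) hnest

lemma good_mul (G₁ : Good t f₁) (G₂ : Good r₂ f₂) :
    Good (t + r₂) (f₁ * MvPolynomial.rename (· + t) f₂) := by
  set g := MvPolynomial.rename (· + t) f₂ with hg
  have hfdeg := G₁.deg
  have hgdeg := good_gdeg_low (t := t) G₂
  have hmem := mem_support_mul_iff hfdeg hgdeg
  have gpos : ∀ m ∈ g.support, 0 < MvPolynomial.coeff m g := by
    intro m hm
    obtain ⟨d, hd, rfl⟩ := (mem_support_rename_shift m).1 hm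
    rw [coeff_rename_shift]
    exact G₂.pos d hd
  have gexpl : ∀ m ∈ g.support, ∀ i, m i ≤ 1 := by
    intro m hm i
    obtain ⟨d, hd, rfl⟩ := (mem_support_rename_shift m).1 hm
    rw [mapDomain_shift_apply]
    split_ifs with h
    · exact G₂.expl d hd _
    · exact Nat.zero_le _
  constructor
  · intro m hm
    obtain ⟨m₁, h₁, m₂, h₂, rfl⟩ := (hmem m).1 hm
    rw [coeff_mul_disjoint hfdeg hgdeg (fun i hi => hfdeg m₁ h₁ i hi)
      (fun i hi => hgdeg m₂ h₂ i hi)]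
    exact mul_pos (G₁.pos m₁ h₁) (gpos m₂ h₂)
  · intro m hm i
    obtain ⟨m₁, h₁, m₂, h₂, rfl⟩ := (hmem m).1 hm
    rw [Finsupp.add_apply]
    rcases lt_or_ge i t with hi | hi
    · rw [hgdeg m₂ h₂ i hi]
      simpa using G₁.expl m₁ h₁ i
    · rw [hfdeg m₁ h₁ i hi]
      simpa using gexpl m₂ h₂ i
  · intro m hm i hi
    obtain ⟨m₁, h₁, m₂, h₂, rfl⟩ := (hmem m).1 hm
    rw [Finsupp.add_apply, hfdeg m₁ h₁ i (by omega), good_gdeg_high G₂ m₂ h₂ i hi]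
  · rw [Lead_add]
    exact (hmem _).2 ⟨Lead t, G₁.lead, _, good_glead G₂, rfl⟩
  · exact (hmem 0).2 ⟨0, G₁.konst, 0, good_gkonst G₂, by simp⟩
  · intro m hm hne
    obtain ⟨m₁, h₁, m₂, h₂, rfl⟩ := (hmem m).1 hm
    rcases eq_or_ne m₁ (Lead t) with rfl | hm₁
    · obtain ⟨d, hd, rfl⟩ := (mem_support_rename_shift m₂).1 h₂
      have hd' : d ≠ Lead r₂ := by
        rintro rfl
        exact hne (Lead_add t r₂).symm
      obtain ⟨i, hmin, hzero⟩ := G₂.miss d hd hd'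
      refine ⟨i + t, isMinVar_mul_right G₁ G₂ hmin, ?_⟩
      rw [Finsupp.add_apply, Lead_apply, if_neg (by omega),
        Finsupp.mapDomain_apply (add_left_injective t), hzero]
    · obtain ⟨i, hmin, hzero⟩ := G₁.miss m₁ h₁ hm₁
      refine ⟨i, isMinVar_mul_left G₁ G₂ hmin, ?_⟩
      rw [Finsupp.add_apply, hzero, hgdeg m₂ h₂ i hmin.1]

end Dev4
section Dev5
open MvPolynomial Finsupp Finset

variable {f : MvPolynomial ℕ ℤ} {r : ℕ} {c : ℤ}

lemma mem_support_step (hc : c ≠ 0) (m : ℕ →₀ ℕ) :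
    m ∈ (f * MvPolynomial.X r + MvPolynomial.C c).support ↔
      m = 0 ∨ ∃ m' ∈ f.support, m = m' + Finsupp.single r 1 := by
  classical
  have h0 : (0 : ℕ →₀ ℕ) ∉ (f * MvPolynomial.X r).support := by
    rw [MvPolynomial.support_mul_X]
    simp only [Finset.mem_map, addRightEmbedding_apply]
    rintro ⟨m', _, heq⟩
    have := DFunLike.congr_fun heq r
    simp [Finsupp.add_apply, Finsupp.single_apply] at this
  rw [MvPolynomial.mem_support_iff, MvPolynomial.coeff_add, MvPolynomial.coeff_C]
  rcases eq_or_ne m 0 with rfl | hm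
  · rw [if_pos rfl, MvPolynomial.notMem_support_iff.1 h0, zero_add]
    simp [hc]
  · rw [if_neg (fun h => hm h.symm), add_zero, ← MvPolynomial.mem_support_iff,
      MvPolynomial.support_mul_X]
    simp only [Finset.mem_map, addRightEmbedding_apply]
    constructor
    · rintro ⟨m', hm', heq⟩
      exact Or.inr ⟨m', hm', heq.symm⟩
    · rintro (rfl | ⟨m', hm', rfl⟩)
      · exact absurd rfl hm
      · exact ⟨m', hm', rfl⟩

lemma addSingle_apply (m' : ℕ →₀ ℕ) {r i : ℕ} (h : i ≠ r) :
    ((m' + Finsupp.single r 1 : ℕ →₀ ℕ) : ℕ → ℕ) i = m' i := by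
  rw [Finsupp.add_apply, Finsupp.single_apply, if_neg (fun hh => h hh.symm), add_zero]

lemma nestle_step_low (hc : c ≠ 0) {i j : ℕ} (hi : i ≠ r) (hj : j ≠ r) :
    NestLe (f * MvPolynomial.X r + MvPolynomial.C c) j i ↔ NestLe f j i := by
  constructor
  · intro h m' hm' hmj
    have hmem : m' + Finsupp.single r 1
        ∈ (f * MvPolynomial.X r + MvPolynomial.C c).support :=
      (mem_support_step hc _).2 (Or.inr ⟨m', hm', rfl⟩)
    have := h _ hmem (by rw [addSingle_apply m' hj]; exact hmj)
    rwa [addSingle_apply m' hi] at this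
  · intro h m hm hmj
    rcases (mem_support_step hc m).1 hm with rfl | ⟨m', hm', rfl⟩
    · simp at hmj
    · rw [addSingle_apply m' hj] at hmj
      rw [addSingle_apply m' hi]
      exact h m' hm' hmj

lemma not_nestle_step (hc : c ≠ 0) {i : ℕ} (hi : i ≠ r)
    (h0 : (0 : ℕ →₀ ℕ) ∈ f.support) :
    ¬ NestLe (f * MvPolynomial.X r + MvPolynomial.C c) r i := by
  intro h
  have hmem : (0 : ℕ →₀ ℕ) + Finsupp.single r 1
      ∈ (f * MvPolynomial.X r + MvPolynomial.C c).support :=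
    (mem_support_step hc _).2 (Or.inr ⟨0, h0, rfl⟩)
  have := h _ hmem (by simp [Finsupp.add_apply, Finsupp.single_apply])
  rw [addSingle_apply 0 hi] at this
  simp at this

lemma isMinVar_step (hc : c ≠ 0) (h0 : (0 : ℕ →₀ ℕ) ∈ f.support) {i : ℕ}
    (h : IsMinVar r f i) :
    IsMinVar (r + 1) (f * MvPolynomial.X r + MvPolynomial.C c) i := by
  have hi := h.1
  refine ⟨by omega, fun j hj hnest => ?_⟩
  rcases lt_or_eq_of_le (Nat.lt_succ_iff.1 hj) with hjr | rfl
  · rw [nestle_step_low hc (by omega) (by omega)] at hnest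
    rw [nestle_step_low hc (by omega) (by omega)]
    exact h.2 j hjr hnest
  · exact absurd hnest (not_nestle_step hc (by omega) h0)

lemma isMinVar_step_zero (hc : c ≠ 0) {f : MvPolynomial ℕ ℤ} :
    IsMinVar 1 (f * MvPolynomial.X 0 + MvPolynomial.C c) 0 := by
  refine ⟨Nat.one_pos, fun j hj hnest => ?_⟩
  interval_cases j
  exact hnest

lemma good_step (G : Good r f) (hc : c ≠ 0) (hcpos : 0 < c) :
    Good (r + 1) (f * MvPolynomial.X r + MvPolynomial.C c) := by
  classical
  have hmem := mem_support_step (f := f) (r := r) hc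
  have hcoeff : ∀ m' : ℕ →₀ ℕ,
      MvPolynomial.coeff (m' + Finsupp.single r 1)
        (f * MvPolynomial.X r + MvPolynomial.C c) = MvPolynomial.coeff m' f := by
    intro m'
    rw [MvPolynomial.coeff_add, MvPolynomial.coeff_mul_X, MvPolynomial.coeff_C,
      if_neg, add_zero]
    intro h
    have := DFunLike.congr_fun h r
    simp [Finsupp.add_apply, Finsupp.single_apply] at this
  have hcoeff0 : MvPolynomial.coeff 0 (f * MvPolynomial.X r + MvPolynomial.C c) = c := by
    rw [MvPolynomial.coeff_add, MvPolynomial.coeff_C, if_pos rfl]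
    have h0 : (0 : ℕ →₀ ℕ) ∉ (f * MvPolynomial.X r).support := by
      rw [MvPolynomial.support_mul_X]
      simp only [Finset.mem_map, addRightEmbedding_apply]
      rintro ⟨m', _, heq⟩
      have := DFunLike.congr_fun heq r
      simp [Finsupp.add_apply, Finsupp.single_apply] at this
    rw [MvPolynomial.notMem_support_iff.1 h0, zero_add]
  constructor
  · intro m hm
    rcases (hmem m).1 hm with rfl | ⟨m', hm', rfl⟩
    · rw [hcoeff0]; exact hcpos
    · rw [hcoeff]; exact G.pos m' hm'
  · intro m hm i
    rcases (hmem m).1 hm with rfl | ⟨m', hm', rfl⟩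
    · simp
    · rw [Finsupp.add_apply, Finsupp.single_apply]
      rcases eq_or_ne r i with rfl | hri
      · rw [G.deg m' hm' r le_rfl, if_pos rfl]
      · rw [if_neg hri, add_zero]; exact G.expl m' hm' i
  · intro m hm i hi
    rcases (hmem m).1 hm with rfl | ⟨m', hm', rfl⟩
    · simp
    · rw [Finsupp.add_apply, Finsupp.single_apply, if_neg (by omega),
        G.deg m' hm' i (by omega)]
      rfl
  · rw [Lead_succ]
    exact (hmem _).2 (Or.inr ⟨Lead r, G.lead, rfl⟩)
  · exact (hmem 0).2 (Or.inl rfl)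
  · intro m hm hne
    rcases (hmem m).1 hm with rfl | ⟨m', hm', rfl⟩
    · rcases Nat.eq_zero_or_pos r with rfl | hr
      · exact ⟨0, isMinVar_step_zero hc, rfl⟩
      · obtain ⟨i, hmin⟩ := exists_isMinVar r hr f
        exact ⟨i, isMinVar_step hc G.konst hmin, rfl⟩
    · rcases Nat.eq_zero_or_pos r with rfl | hr
      · exfalso
        apply hne
        have : m' = Lead 0 := by
          ext i
          rw [G.deg m' hm' i (Nat.zero_le _), Lead_apply]
          simp
        rw [this, ← Lead_succ]
      · have hm'ne : m' ≠ Lead r := by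
          rintro rfl
          exact hne (Lead_succ r).symm
        obtain ⟨i, hmin, hzero⟩ := G.miss m' hm' hm'ne
        refine ⟨i, isMinVar_step hc G.konst hmin, ?_⟩
        have := hmin.1
        rw [Finsupp.add_apply, hzero, Finsupp.single_apply, if_neg (by omega), add_zero]
        
lemma good_const (k : ℕ) (hk : 0 < k) : Good 0 (MvPolynomial.C (k : ℤ)) := by
  have hk' : (k : ℤ) ≠ 0 := by exact_mod_cast hk.ne'
  have hsupp : (MvPolynomial.C (k : ℤ) : MvPolynomial ℕ ℤ).support = {0} := by
    rw [MvPolynomial.C_apply, MvPolynomial.support_monomial, if_neg hk']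
  constructor
  · intro m hm
    rw [hsupp, Finset.mem_singleton] at hm
    subst hm
    rw [MvPolynomial.coeff_C, if_pos rfl]
    exact_mod_cast hk
  · intro m hm i
    rw [hsupp, Finset.mem_singleton] at hm; subst hm; simp
  · intro m hm i _
    rw [hsupp, Finset.mem_singleton] at hm; subst hm; simp
  · rw [hsupp, Finset.mem_singleton, Lead]; simp
  · rw [hsupp, Finset.mem_singleton]
  · intro m hm hne
    exfalso
    rw [hsupp, Finset.mem_singleton] at hm
    subst hm
    apply hne
    rw [Lead]; simp

lemma good_of_LDP {r : ℕ} {f : MvPolynomial ℕ ℤ} {C : ℕ} (h : LDP r f C) : Good r f := by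
  induction h with
  | const k C hk hC => exact good_const k hk
  | mul h₁ h₂ ih₁ ih₂ => exact good_mul ih₁ ih₂
  | step c D hc hD h ih =>
      exact good_step ih (by exact_mod_cast hc.ne') (by exact_mod_cast hc)

end Dev5
section Dev6
open MvPolynomial Finsupp Finset

variable {r : ℕ} {f : MvPolynomial ℕ ℤ}

lemma eval3_eq_sum (G : Good r f) (k : ℕ → ℕ) :
    eval3 r f k
      = ∑ m ∈ f.support, MvPolynomial.coeff m f * 3 ^ (∑ i ∈ m.support, k i) := by
  rw [eval3, MvPolynomial.eval_eq]
  refine Finset.sum_congr rfl fun m hm => ?_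
  congr 1
  rw [← Finset.prod_pow_eq_pow_sum]
  refine Finset.prod_congr rfl fun i hi => ?_
  have hne : m i ≠ 0 := Finsupp.mem_support_iff.1 hi
  have h1 : m i = 1 := le_antisymm (G.expl m hm i) (Nat.one_le_iff_ne_zero.2 hne)
  have hir : i < r := by
    by_contra h
    exact hne (G.deg m hm i (Nat.le_of_not_lt h))
  rw [if_pos hir, h1, pow_one]

lemma lead_term (G : Good r f) (k : ℕ → ℕ) :
    MvPolynomial.coeff (Lead r) f * 3 ^ (∑ i ∈ (Lead r).support, k i)
      = leadCoeff r f * 3 ^ (∑ i ∈ Finset.range r, k i) := by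
  rw [Lead_support, leadCoeff, ← Lead]

lemma eval3_lower (G : Good r f) (k : ℕ → ℕ) :
    leadCoeff r f * 3 ^ (∑ i ∈ Finset.range r, k i) ≤ eval3 r f k := by
  classical
  rw [eval3_eq_sum G k, ← Finset.sum_erase_add _ _ G.lead, lead_term G k]
  have : (0:ℤ) ≤ ∑ m ∈ f.support.erase (Lead r),
      MvPolynomial.coeff m f * 3 ^ (∑ i ∈ m.support, k i) := by
    refine Finset.sum_nonneg fun m hm => ?_
    have hm' := Finset.mem_of_mem_erase hm
    exact mul_nonneg (le_of_lt (G.pos m hm')) (pow_nonneg (by norm_num) _)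
  linarith

lemma eval3_upper (G : Good r f) (k : ℕ → ℕ) (K : ℕ)
    (hK : ∀ i, IsMinVar r f i → K + 1 ≤ k i) :
    (eval3 r f k - leadCoeff r f * 3 ^ (∑ i ∈ Finset.range r, k i)) * 3 ^ (K + 1)
      ≤ (∑ m ∈ f.support, MvPolynomial.coeff m f) * 3 ^ (∑ i ∈ Finset.range r, k i) := by
  classical
  set S := ∑ i ∈ Finset.range r, k i with hS
  rw [eval3_eq_sum G k, ← Finset.sum_erase_add _ _ G.lead, lead_term G k]
  rw [add_sub_cancel_right, Finset.sum_mul]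
  have step : ∀ m ∈ f.support.erase (Lead r),
      MvPolynomial.coeff m f * 3 ^ (∑ i ∈ m.support, k i) * 3 ^ (K + 1)
        ≤ MvPolynomial.coeff m f * 3 ^ S := by
    intro m hm
    have hm' := Finset.mem_of_mem_erase hm
    obtain ⟨i0, hmin, hzero⟩ := G.miss m hm' (Finset.ne_of_mem_erase hm)
    have hi0r : i0 < r := hmin.1
    have hi0 : i0 ∉ m.support := by
      rw [Finsupp.mem_support_iff]; exact fun h => h hzero
    have hsub : insert i0 m.support ⊆ Finset.range r := by
      intro j hj
      rcases Finset.mem_insert.1 hj with rfl | hj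
      · exact Finset.mem_range.2 hi0r
      · rw [Finset.mem_range]
        by_contra h
        exact Finsupp.mem_support_iff.1 hj (G.deg m hm' j (Nat.le_of_not_lt h))
    have hsum : (∑ i ∈ m.support, k i) + k i0 ≤ S := by
      rw [hS, add_comm, ← Finset.sum_insert hi0]
      exact Finset.sum_le_sum_of_subset hsub
    have hexp : (∑ i ∈ m.support, k i) + (K + 1) ≤ S := by
      have := hK i0 hmin
      omega
    rw [mul_assoc, ← pow_add]
    refine mul_le_mul_of_nonneg_left ?_ (le_of_lt (G.pos m hm'))
    exact pow_le_pow_right₀ (by norm_num) hexp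
  calc ∑ m ∈ f.support.erase (Lead r),
        MvPolynomial.coeff m f * 3 ^ (∑ i ∈ m.support, k i) * 3 ^ (K + 1)
      ≤ ∑ m ∈ f.support.erase (Lead r), MvPolynomial.coeff m f * 3 ^ S :=
        Finset.sum_le_sum step
    _ ≤ ∑ m ∈ f.support, MvPolynomial.coeff m f * 3 ^ S := by
        refine Finset.sum_le_sum_of_subset_of_nonneg (Finset.erase_subset _ _)
          fun m hm _ => mul_nonneg (le_of_lt (G.pos m hm)) (pow_nonneg (by norm_num) _)
    _ = (∑ m ∈ f.support, MvPolynomial.coeff m f) * 3 ^ S := by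
        rw [Finset.sum_mul]

end Dev6
/-- If `0 ≤ s < δ(f,C)` then there is `K` so that whenever
`δ_{f,C}(k₁,…,k_r) < s`, some coordinate at a minimal variable is at most `K`. -/
theorem small_dft_bounded_min_coord (r : ℕ) (f : MvPolynomial ℕ ℤ) (C : ℕ)
    (hf : LDP r f C) (hr : 0 < r) (s : ℝ) (hs0 : 0 ≤ s) (hs : s < pairDft r f C) :
    ∃ K : ℕ, ∀ k : ℕ → ℕ, dftF r f C k < s →
      ∃ i < r, IsMinVar r f i ∧ k i ≤ K := by
  classical
  have G := good_of_LDP hf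
  have hlead_eq : leadCoeff r f = MvPolynomial.coeff (Lead r) f := rfl
  have ha1 : 1 ≤ leadCoeff r f := by
    rw [hlead_eq]; exact G.pos _ G.lead
  set a : ℤ := leadCoeff r f with ha
  set M : ℤ := ∑ m ∈ f.support, MvPolynomial.coeff m f with hM
  have hM0 : 0 ≤ M :=
    Finset.sum_nonneg fun m hm => le_of_lt (G.pos m hm)
  set d : ℝ := pairDft r f C - s with hdd
  have hd : 0 < d := by rw [hdd]; linarith
  set t : ℝ := (3 : ℝ) ^ (d / 3 : ℝ) with htdef
  have ht : 1 < t := Real.one_lt_rpow (by norm_num) (by linarith)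
  obtain ⟨N, hN⟩ := exists_nat_gt ((M : ℝ) / (t - 1))
  refine ⟨N, fun k hk => ?_⟩
  by_contra hcon
  push_neg at hcon
  have hK : ∀ i, IsMinVar r f i → N + 1 ≤ k i := fun i hi => hcon i hi.1 hi
  set S : ℕ := ∑ i ∈ Finset.range r, k i with hSdef
  have hlow := eval3_lower G k
  have hup := eval3_upper G k N hK
  -- pass to ℝ
  set E : ℝ := ((eval3 r f k : ℤ) : ℝ) with hEdef
  set A : ℝ := ((a : ℤ) : ℝ) * (3 : ℝ) ^ S with hAdef
  have h3S : (0 : ℝ) < (3 : ℝ) ^ S := by positivity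
  have h3P : (0 : ℝ) < (3 : ℝ) ^ (N + 1) := by positivity
  have hAcast : (1 : ℝ) ≤ ((a : ℤ) : ℝ) := by exact_mod_cast ha1
  have hA1 : (3:ℝ) ^ S ≤ A := by
    rw [hAdef]; nlinarith
  have hApos : 0 < A := lt_of_lt_of_le h3S hA1
  have hAE : A ≤ E := by
    rw [hAdef, hEdef]
    exact_mod_cast hlow
  have hEpos : 0 < E := lt_of_lt_of_le hApos hAE
  -- `M ≤ (t-1) * 3^(N+1)`
  have hN3 : (N : ℝ) ≤ (3 : ℝ) ^ (N + 1) := by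
    have h1 : N < 2 ^ N := Nat.lt_two_pow_self
    have h2 : (2:ℕ) ^ N ≤ 3 ^ (N + 1) :=
      le_trans (Nat.pow_le_pow_left (by norm_num) N)
        (Nat.pow_le_pow_right (by norm_num) (by omega))
    have : (N : ℕ) ≤ 3 ^ (N + 1) := le_trans (le_of_lt h1) h2
    exact_mod_cast this
  have hMle : (M : ℝ) ≤ (t - 1) * (3 : ℝ) ^ (N + 1) := by
    have h1 : (M : ℝ) / (t - 1) < (N : ℝ) := hN
    have h2 : (M : ℝ) < (t - 1) * (N : ℝ) := by
      rw [div_lt_iff₀ (by linarith : (0:ℝ) < t - 1)] at h1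
      linarith [h1]
    nlinarith
  -- upper bound `E ≤ A * t`
  have hupR : E ≤ A * t := by
    have h1 : (E - A) * (3:ℝ) ^ (N + 1) ≤ (M : ℝ) * (3:ℝ) ^ S := by
      have := hup
      have hcast : ((eval3 r f k - a * 3 ^ S) * 3 ^ (N + 1) : ℤ) ≤ (M * 3 ^ S : ℤ) := hup
      have : (((eval3 r f k - a * 3 ^ S) * 3 ^ (N + 1) : ℤ) : ℝ)
          ≤ ((M * 3 ^ S : ℤ) : ℝ) := by exact_mod_cast hcast
      push_cast at this
      rw [hEdef, hAdef]
      push_cast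
      linarith
    have h2 : (M : ℝ) * (3:ℝ) ^ S ≤ ((t - 1) * (3:ℝ) ^ (N + 1)) * (3:ℝ) ^ S :=
      mul_le_mul_of_nonneg_right hMle h3S.le
    have h3 : ((t - 1) * (3:ℝ) ^ (N + 1)) * (3:ℝ) ^ S
        ≤ ((t - 1) * (3:ℝ) ^ (N + 1)) * A := by
      refine mul_le_mul_of_nonneg_left hA1 ?_
      have : 0 < t - 1 := by linarith
      positivity
    have h4 : (E - A) * (3:ℝ) ^ (N + 1) ≤ ((t - 1) * A) * (3:ℝ) ^ (N + 1) := by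
      calc (E - A) * (3:ℝ) ^ (N + 1) ≤ ((t - 1) * (3:ℝ) ^ (N + 1)) * A :=
            le_trans h1 (le_trans h2 h3)
        _ = ((t - 1) * A) * (3:ℝ) ^ (N + 1) := by ring
    have h5 : E - A ≤ (t - 1) * A := le_of_mul_le_mul_right h4 h3P
    nlinarith
  -- logarithms
  have hb : (1:ℝ) < 3 := by norm_num
  have hlogE : Real.logb 3 E ≤ Real.logb 3 (A * t) :=
    Real.logb_le_logb_of_le hb hEpos hupR
  have hlogAt : Real.logb 3 (A * t)
      = Real.logb 3 ((a : ℤ) : ℝ) + (S : ℝ) + d / 3 := by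
    rw [hAdef, Real.logb_mul (by positivity) (by positivity),
      Real.logb_mul (by positivity) (by positivity), Real.logb_pow,
      Real.logb_self_eq_one hb, htdef, Real.logb_rpow (b := 3) (by norm_num) (by norm_num)]
    ring
  have hdft : dftF r f C k = (C : ℝ) + 3 * (S : ℝ) - 3 * Real.logb 3 E := by
    rw [dftF, hEdef, hSdef]
    push_cast
    ring_nf
  have hpair : pairDft r f C = (C : ℝ) - 3 * Real.logb 3 ((a : ℤ) : ℝ) := rfl
  have hfinal : (C : ℝ) + 3 * (S : ℝ) - 3 * Real.logb 3 E ≥ s := by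
    have h6 : Real.logb 3 E ≤ Real.logb 3 ((a : ℤ) : ℝ) + (S : ℝ) + d / 3 := by
      rw [← hlogAt]; exact hlogE
    have h8 : d = pairDft r f C - s := hdd
    rw [hpair] at h8
    linarith
  linarith [hdft, hfinal, hk]
end

section
/- Let (f,C) be a low-defect pair of degree r, let xᵢ be a variable of f minimal with respect to the nesting order, let k ≥ 0 be an integer, and define g(x₁,…,x_{i−1},x_{i+1},…,x_r) := f(x₁,…,x_{i−1},3^k,x_{i+1},…,x_r). Then: (1) g is a low-defect polynomial and (g, C+3k) is a low-defect pair; (2) if a is the leading coefficient of f, the leading coefficient of g is strictly greater than a·3^k, so δ(g, C+3k) < δ(f,C); (3) the nesting order on the variables of g is the restriction of the nesting order on the variables of f to {x₁,…,x_{i−1},x_{i+1},…,x_r}; (4) for all nonnegative integers k₁,…,k_{i−1},k_{i+1},…,k_r, δ_{g,C+3k}(k₁,…,k_{i−1},k_{i+1},…,k_r) = δ_{f,C}(k₁,…,k_{i−1},k,k_{i+1},…,k_r). -/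
/-- The embedding of `{0,…,r-2}` into `{0,…,r-1}` skipping `i`. -/
def skipEmb (i j : ℕ) : ℕ := if j < i then j else j + 1


/-! ### Auxiliary lemmas -/

open MvPolynomial Finsupp

lemma cpxW_self : ∀ n : ℕ, 0 < n → CpxW n n := by
  intro n hn
  induction n with
  | zero => omega
  | succ m ih =>
    rcases Nat.eq_or_lt_of_le hn with h | h
    · exact h ▸ CpxW.one
    · exact CpxW.add (ih (by omega)) CpxW.one

lemma cpx_mem {n : ℕ} (h : 0 < n) : CpxW n (cpx n) :=
  Nat.sInf_mem ⟨n, cpxW_self n h⟩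

lemma cpx_le {n k : ℕ} (h : CpxW n k) : cpx n ≤ k := Nat.sInf_le h

lemma cpx_mul_le {a b : ℕ} (ha : 0 < a) (hb : 0 < b) : cpx (a * b) ≤ cpx a + cpx b :=
  cpx_le ((cpx_mem ha).mul (cpx_mem hb))

lemma cpx_add_le {a b : ℕ} (ha : 0 < a) (hb : 0 < b) : cpx (a + b) ≤ cpx a + cpx b :=
  cpx_le ((cpx_mem ha).add (cpx_mem hb))

lemma cpx_three : cpx 3 ≤ 3 := cpx_le (CpxW.add (CpxW.add CpxW.one CpxW.one) CpxW.one)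

lemma cpx_mul_pow3 {a : ℕ} (ha : 0 < a) (k : ℕ) : cpx (a * 3 ^ k) ≤ cpx a + 3 * k := by
  induction k with
  | zero => simp
  | succ m ih =>
    have h1 : a * 3 ^ (m + 1) = a * 3 ^ m * 3 := by ring
    have h2 : cpx (a * 3 ^ m * 3) ≤ cpx (a * 3 ^ m) + cpx 3 :=
      cpx_mul_le (by positivity) (by norm_num)
    rw [h1]
    have := cpx_three
    omega

/-- The full multilinear monomial `x₀ ⋯ x_{r-1}`. -/
noncomputable def fullMon (r : ℕ) : ℕ →₀ ℕ := ∑ i ∈ Finset.range r, Finsupp.single i 1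

lemma leadCoeff_eq (r : ℕ) (f : MvPolynomial ℕ ℤ) :
    leadCoeff r f = MvPolynomial.coeff (fullMon r) f := rfl

lemma fullMon_apply (r j : ℕ) : fullMon r j = if j < r then 1 else 0 := by
  classical
  rw [fullMon, Finsupp.finset_sum_apply]
  simp only [Finsupp.single_apply]
  rw [Finset.sum_ite_eq' (Finset.range r) j (fun _ => 1)]
  simp

lemma mapDomain_addt_apply (t : ℕ) (m : ℕ →₀ ℕ) (j : ℕ) :
    Finsupp.mapDomain (· + t) m j = if t ≤ j then m (j - t) else 0 := by
  have hinj : Function.Injective (· + t) := add_left_injective t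
  split_ifs with h
  · have : j = (j - t) + t := by omega
    conv_lhs => rw [this, Finsupp.mapDomain_apply hinj]
  · apply Finsupp.mapDomain_notin_range
    rintro ⟨a, rfl⟩
    exact h (Nat.le_add_left t a)

lemma fullMon_add (t s : ℕ) :
    fullMon (t + s) = fullMon t + Finsupp.mapDomain (· + t) (fullMon s) := by
  ext j
  rw [Finsupp.add_apply, mapDomain_addt_apply, fullMon_apply, fullMon_apply, fullMon_apply]
  split_ifs <;> omega

/-- Coefficients of a product of polynomials in disjoint sets of variables. -/
lemma coeff_mul_rename (p q : MvPolynomial ℕ ℤ) (t : ℕ)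
    (hp : ∀ m : ℕ →₀ ℕ, MvPolynomial.coeff m p ≠ 0 → ∀ j, t ≤ j → m j = 0)
    (m₁ m₂ : ℕ →₀ ℕ) (hm₁ : ∀ j, t ≤ j → m₁ j = 0) :
    MvPolynomial.coeff (m₁ + Finsupp.mapDomain (· + t) m₂)
        (p * MvPolynomial.rename (· + t) q)
      = MvPolynomial.coeff m₁ p * MvPolynomial.coeff m₂ q := by
  classical
  have hinj : Function.Injective (· + t) := add_left_injective t
  rw [MvPolynomial.coeff_mul]
  rw [Finset.sum_eq_single_of_mem (m₁, Finsupp.mapDomain (· + t) m₂)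
    (Finset.HasAntidiagonal.mem_antidiagonal.2 rfl)]
  · rw [MvPolynomial.coeff_rename_mapDomain _ hinj]
  · rintro ⟨a, b⟩ hab hne
    by_contra hcon
    have ha : MvPolynomial.coeff a p ≠ 0 := fun h => hcon (by simp [h])
    have hb : MvPolynomial.coeff b (MvPolynomial.rename (· + t) q) ≠ 0 :=
      fun h => hcon (by simp [h])
    have hbs : b ∈ (MvPolynomial.rename (· + t) q).support :=
      MvPolynomial.mem_support_iff.2 hb
    rw [MvPolynomial.support_rename_of_injective hinj, Finset.mem_image] at hbs
    obtain ⟨m₂', _, rfl⟩ := hbs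
    have hsum := Finset.HasAntidiagonal.mem_antidiagonal.1 hab
    have haeq : a = m₁ := by
      ext j
      by_cases hj : t ≤ j
      · rw [hp a ha j hj, hm₁ j hj]
      · have := congrArg (fun (v : ℕ →₀ ℕ) => v j) hsum
        simp only [Finsupp.add_apply, mapDomain_addt_apply, if_neg hj, add_zero] at this
        exact this
    subst haeq
    have hbeq : Finsupp.mapDomain (· + t) m₂' = Finsupp.mapDomain (· + t) m₂ :=
      add_left_cancel hsum
    exact hne (by rw [hbeq])

lemma leadCoeff_mul_rename (p q : MvPolynomial ℕ ℤ) (t s : ℕ)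
    (hp : ∀ m : ℕ →₀ ℕ, MvPolynomial.coeff m p ≠ 0 → ∀ j, t ≤ j → m j = 0) :
    leadCoeff (t + s) (p * MvPolynomial.rename (· + t) q)
      = leadCoeff t p * leadCoeff s q := by
  rw [leadCoeff_eq, leadCoeff_eq, leadCoeff_eq, ← coeff_mul_rename p q t hp _ _
    (fun j hj => by rw [fullMon_apply]; simp only [ite_eq_right_iff]; omega), ← fullMon_add]

lemma fullMon_zero : fullMon 0 = 0 := by simp [fullMon]

lemma fullMon_succ (r : ℕ) : fullMon (r + 1) = fullMon r + Finsupp.single r 1 := by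
  rw [fullMon, fullMon, Finset.sum_range_succ]

lemma coeff_rename_cases (q : MvPolynomial ℕ ℤ) (t : ℕ) (m : ℕ →₀ ℕ) :
    MvPolynomial.coeff m (MvPolynomial.rename (· + t) q) = 0 ∨
      ∃ m₂, m = Finsupp.mapDomain (· + t) m₂ ∧
        MvPolynomial.coeff m (MvPolynomial.rename (· + t) q) = MvPolynomial.coeff m₂ q := by
  classical
  have hinj : Function.Injective (· + t) := add_left_injective t
  by_cases h : MvPolynomial.coeff m (MvPolynomial.rename (· + t) q) = 0
  · exact Or.inl h
  · right
    have hm : m ∈ (MvPolynomial.rename (· + t) q).support := MvPolynomial.mem_support_iff.2 h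
    rw [MvPolynomial.support_rename_of_injective hinj, Finset.mem_image] at hm
    obtain ⟨m₂, _, rfl⟩ := hm
    exact ⟨m₂, rfl, MvPolynomial.coeff_rename_mapDomain _ hinj _ _⟩

lemma mul_coeff_decomp {p q : MvPolynomial ℕ ℤ} {t : ℕ} {m : ℕ →₀ ℕ}
    (h : MvPolynomial.coeff m (p * MvPolynomial.rename (· + t) q) ≠ 0) :
    ∃ a b, MvPolynomial.coeff a p ≠ 0 ∧ MvPolynomial.coeff b q ≠ 0 ∧
      m = a + Finsupp.mapDomain (· + t) b := by
  classical
  rw [MvPolynomial.coeff_mul] at h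
  obtain ⟨⟨a, b⟩, hab, hne⟩ := Finset.exists_ne_zero_of_sum_ne_zero h
  have ha : MvPolynomial.coeff a p ≠ 0 := fun h0 => hne (by simp [h0])
  have hb : MvPolynomial.coeff b (MvPolynomial.rename (· + t) q) ≠ 0 :=
    fun h0 => hne (by simp [h0])
  rcases coeff_rename_cases q t b with h0 | ⟨m₂, rfl, heq⟩
  · exact absurd h0 hb
  · exact ⟨a, m₂, ha, heq ▸ hb, (Finset.HasAntidiagonal.mem_antidiagonal.1 hab).symm⟩

lemma coeff_step (g : MvPolynomial ℕ ℤ) (c : ℤ) (r : ℕ) (m : ℕ →₀ ℕ) :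
    MvPolynomial.coeff m (g * MvPolynomial.X r + MvPolynomial.C c)
      = (if m r ≠ 0 then MvPolynomial.coeff (m - Finsupp.single r 1) g else 0)
        + (if m = 0 then c else 0) := by
  classical
  rw [MvPolynomial.coeff_add, MvPolynomial.coeff_mul_X', MvPolynomial.coeff_C]
  congr 1
  · congr 1
    simp [Finsupp.mem_support_iff]
  · split_ifs with h1 h2 h2 <;> first | rfl | (exact absurd h1.symm h2) | (exact absurd h2.symm h1)

/-- Basic structural facts about low-defect polynomials. -/
structure LDPFacts (r : ℕ) (f : MvPolynomial ℕ ℤ) : Prop where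
  varsLt : ∀ m : ℕ →₀ ℕ, MvPolynomial.coeff m f ≠ 0 → ∀ j, r ≤ j → m j = 0
  coeffNonneg : ∀ m, 0 ≤ MvPolynomial.coeff m f
  leadPos : 0 < leadCoeff r f
  constPos : 0 < MvPolynomial.coeff 0 f
  varMem : ∀ j < r, ∃ m, MvPolynomial.coeff m f ≠ 0 ∧ m j ≠ 0

lemma ldp_facts {r : ℕ} {f : MvPolynomial ℕ ℤ} {C : ℕ} (h : LDP r f C) : LDPFacts r f := by
  classical
  induction h with
  | const k C hk hC =>
    constructor
    · intro m hm j _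
      by_cases h0 : m = 0
      · simp [h0]
      · rw [MvPolynomial.coeff_C, if_neg (fun hh => h0 hh.symm)] at hm
        exact absurd rfl hm
    · intro m
      rw [MvPolynomial.coeff_C]
      split_ifs
      · positivity
      · rfl
    · rw [leadCoeff_eq, fullMon_zero, MvPolynomial.coeff_C, if_pos rfl]
      exact_mod_cast hk
    · rw [MvPolynomial.coeff_C, if_pos rfl]
      exact_mod_cast hk
    · intro j hj; omega
  | mul h₁ h₂ ih₁ ih₂ =>
    rename_i r₁ r₂ f₁ f₂ C₁ C₂
    have key : ∀ (m₁ m₂ : ℕ →₀ ℕ), MvPolynomial.coeff m₁ f₁ ≠ 0 →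
        MvPolynomial.coeff (m₁ + Finsupp.mapDomain (· + r₁) m₂)
          (f₁ * MvPolynomial.rename (· + r₁) f₂)
          = MvPolynomial.coeff m₁ f₁ * MvPolynomial.coeff m₂ f₂ := by
      intro m₁ m₂ hm₁
      exact coeff_mul_rename f₁ f₂ r₁ ih₁.varsLt m₁ m₂ (fun j hj => ih₁.varsLt m₁ hm₁ j hj)
    constructor
    · intro m hm j hj
      obtain ⟨a, b, ha, hb, rfl⟩ := mul_coeff_decomp hm
      rw [Finsupp.add_apply, ih₁.varsLt a ha j (by omega), mapDomain_addt_apply,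
        if_pos (by omega : r₁ ≤ j), ih₂.varsLt b hb (j - r₁) (by omega)]
    · intro m
      rw [MvPolynomial.coeff_mul]
      apply Finset.sum_nonneg
      rintro ⟨a, b⟩ _
      apply mul_nonneg (ih₁.coeffNonneg a)
      rcases coeff_rename_cases f₂ r₁ b with h0 | ⟨m₂, rfl, heq⟩
      · rw [h0]
      · rw [heq]; exact ih₂.coeffNonneg m₂
    · rw [leadCoeff_mul_rename _ _ _ _ ih₁.varsLt]
      exact mul_pos ih₁.leadPos ih₂.leadPos
    · have h0 : (0 : ℕ →₀ ℕ) = 0 + Finsupp.mapDomain (· + r₁) 0 := by simp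
      rw [h0, key 0 0 (by exact ih₁.constPos.ne')]
      exact mul_pos ih₁.constPos ih₂.constPos
    · intro j hj
      by_cases hlt : j < r₁
      · obtain ⟨m, hm, hmj⟩ := ih₁.varMem j hlt
        refine ⟨m + Finsupp.mapDomain (· + r₁) 0, ?_, ?_⟩
        · rw [key m 0 hm]
          exact mul_ne_zero hm ih₂.constPos.ne'
        · simpa using hmj
      · obtain ⟨m, hm, hmj⟩ := ih₂.varMem (j - r₁) (by omega)
        refine ⟨0 + Finsupp.mapDomain (· + r₁) m, ?_, ?_⟩
        · rw [key 0 m ih₁.constPos.ne']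
          exact mul_ne_zero ih₁.constPos.ne' hm
        · rw [Finsupp.add_apply, Finsupp.zero_apply, mapDomain_addt_apply,
            if_pos (by omega : r₁ ≤ j)]
          simpa using hmj
  | step c D hc hD hg ihg =>
    rename_i r g Cg
    constructor
    · intro m hm j hj
      rw [coeff_step] at hm
      by_cases h0 : m = 0
      · simp [h0]
      · rw [if_neg h0, add_zero] at hm
        split_ifs at hm with h1
        · have := ihg.varsLt _ hm j (by omega)
          rw [Finsupp.tsub_apply, Finsupp.single_apply, if_neg (by omega : ¬ r = j)] at this
          omega
        · exact absurd rfl hm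
    · intro m
      rw [coeff_step]
      apply add_nonneg
      · split_ifs with h1
        · exact ihg.coeffNonneg _
        · rfl
      · split_ifs
        · positivity
        · exact le_refl 0
    · rw [leadCoeff_eq, fullMon_succ, coeff_step]
      have h1 : (fullMon r + Finsupp.single r 1 : ℕ →₀ ℕ) r ≠ 0 := by
        rw [Finsupp.add_apply, fullMon_apply, Finsupp.single_apply]
        simp
      have h2 : fullMon r + Finsupp.single r 1 ≠ 0 := by
        intro hh
        have := congrArg (fun v : ℕ →₀ ℕ => v r) hh
        simp only [Finsupp.coe_zero, Pi.zero_apply] at this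
        exact h1 this
      rw [if_pos h1, if_neg h2, add_zero, add_tsub_cancel_right]
      exact ihg.leadPos
    · rw [coeff_step]
      simp only [Finsupp.coe_zero, Pi.zero_apply, ne_eq, not_true_eq_false, if_pos rfl,
        if_neg (by simp : ¬ (0 : ℤ) ≠ 0)]
      norm_num
      exact_mod_cast hc
    · intro j hj
      by_cases hjr : j = r
      · refine ⟨Finsupp.single r 1, ?_, ?_⟩
        · rw [coeff_step, if_pos (by simp), if_neg (by simp), add_zero, tsub_self]
          exact ihg.constPos.ne'
        · rw [hjr]; simp
      · obtain ⟨m, hm, hmj⟩ := ihg.varMem j (by omega)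
        refine ⟨m + Finsupp.single r 1, ?_, ?_⟩
        · have h1 : (m + Finsupp.single r 1 : ℕ →₀ ℕ) r ≠ 0 := by simp
          have h2 : m + Finsupp.single r 1 ≠ 0 := by
            intro hh
            have := congrArg (fun v : ℕ →₀ ℕ => v r) hh
            simp at this
          rw [coeff_step, if_pos h1, if_neg h2, add_zero, add_tsub_cancel_right]
          exact hm
        · rw [Finsupp.add_apply, Finsupp.single_apply, if_neg (fun hh => hjr hh.symm), add_zero]
          exact hmj

lemma ldp_zero_aux {r : ℕ} {f : MvPolynomial ℕ ℤ} {C : ℕ} (h : LDP r f C) : r = 0 →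
    ∃ a : ℕ, 0 < a ∧ f = MvPolynomial.C (a : ℤ) ∧ cpx a ≤ C := by
  induction h with
  | const k C hk hC => exact fun _ => ⟨k, hk, rfl, hC⟩
  | mul h₁ h₂ ih₁ ih₂ =>
    rename_i r₁ r₂ f₁ f₂ C₁ C₂
    intro h0
    obtain ⟨a₁, ha₁, rfl, hc₁⟩ := ih₁ (by omega)
    obtain ⟨a₂, ha₂, rfl, hc₂⟩ := ih₂ (by omega)
    refine ⟨a₁ * a₂, by positivity, ?_, ?_⟩
    · rw [MvPolynomial.rename_C, ← MvPolynomial.C_mul]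
      push_cast
      ring_nf
    · calc cpx (a₁ * a₂) ≤ cpx a₁ + cpx a₂ := cpx_mul_le ha₁ ha₂
        _ ≤ C₁ + C₂ := by omega
  | step c D hc hD hg ihg => intro h0; omega

lemma ldp_zero {f : MvPolynomial ℕ ℤ} {C : ℕ} (h : LDP 0 f C) :
    ∃ a : ℕ, 0 < a ∧ f = MvPolynomial.C (a : ℤ) ∧ cpx a ≤ C := ldp_zero_aux h rfl

/-- The substitution function used in `truncAt`. -/
noncomputable def truncFun (i k : ℕ) : ℕ → MvPolynomial ℕ ℤ := fun j =>
  if j < i then MvPolynomial.X j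
    else if j = i then MvPolynomial.C ((3 : ℤ) ^ k) else MvPolynomial.X (j - 1)

lemma truncAt_eq (f : MvPolynomial ℕ ℤ) (i k : ℕ) :
    truncAt f i k = MvPolynomial.aeval (truncFun i k) f := rfl

lemma aeval_self (p : MvPolynomial ℕ ℤ) (ψ : ℕ → MvPolynomial ℕ ℤ)
    (h : ∀ j (m : ℕ →₀ ℕ), MvPolynomial.coeff m p ≠ 0 → m j ≠ 0 → ψ j = MvPolynomial.X j) :
    MvPolynomial.aeval ψ p = p := by
  rw [MvPolynomial.aeval_def]
  have : MvPolynomial.eval₂ (algebraMap ℤ (MvPolynomial ℕ ℤ)) ψ p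
      = MvPolynomial.eval₂ (algebraMap ℤ (MvPolynomial ℕ ℤ)) MvPolynomial.X p := by
    apply MvPolynomial.eval₂_congr
    intro j c hj hc
    exact h j c hc (Finsupp.mem_support_iff.1 hj)
  rw [this, MvPolynomial.algebraMap_eq, MvPolynomial.eval₂_eta]

lemma rename_eq_aeval (g : ℕ → ℕ) (q : MvPolynomial ℕ ℤ) :
    MvPolynomial.rename g q = MvPolynomial.aeval (fun j => MvPolynomial.X (g j)) q := by
  rw [← MvPolynomial.aeval_X_left_apply (MvPolynomial.rename g q), MvPolynomial.aeval_rename,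
    Function.comp_def]

lemma truncAt_mul_left {p q : MvPolynomial ℕ ℤ} {t i : ℕ} (k : ℕ) (hit : i < t) :
    truncAt (p * MvPolynomial.rename (· + t) q) i k
      = truncAt p i k * MvPolynomial.rename (· + (t - 1)) q := by
  rw [truncAt_eq, map_mul, MvPolynomial.aeval_rename, ← truncAt_eq, rename_eq_aeval]
  have hfun : (truncFun i k ∘ (· + t)) = fun j => MvPolynomial.X (j + (t - 1)) := by
    funext j
    show truncFun i k (j + t) = _
    rw [truncFun, if_neg (by omega), if_neg (by omega)]
    congr 1
    omega
  rw [hfun]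

lemma truncAt_mul_right {p q : MvPolynomial ℕ ℤ} {t i : ℕ} (k : ℕ) (hit : t ≤ i)
    (hp : ∀ m : ℕ →₀ ℕ, MvPolynomial.coeff m p ≠ 0 → ∀ j, t ≤ j → m j = 0) :
    truncAt (p * MvPolynomial.rename (· + t) q) i k
      = p * MvPolynomial.rename (· + t) (truncAt q (i - t) k) := by
  rw [truncAt_eq, map_mul]
  congr 1
  · apply aeval_self
    intro j m hm hmj
    have hj : j < t := by
      by_contra hj
      exact hmj (hp m hm j (by omega))
    rw [truncFun, if_pos (by omega)]
  · rw [MvPolynomial.aeval_rename, truncAt_eq, MvPolynomial.comp_aeval_apply]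
    have hfun : (truncFun i k ∘ (· + t))
        = fun j => MvPolynomial.rename (· + t) (truncFun (i - t) k j) := by
      funext j
      show truncFun i k (j + t) = MvPolynomial.rename (· + t) (truncFun (i - t) k j)
      rw [truncFun, truncFun]
      rcases lt_trichotomy j (i - t) with h | h | h
      · rw [if_pos (show j + t < i by omega), if_pos h, MvPolynomial.rename_X]
      · rw [if_neg (show ¬ j + t < i by omega), if_pos (show j + t = i by omega),
          if_neg (show ¬ j < i - t by omega), if_pos h, MvPolynomial.rename_C]
      · rw [if_neg (show ¬ j + t < i by omega), if_neg (show ¬ j + t = i by omega),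
          if_neg (show ¬ j < i - t by omega), if_neg (show ¬ j = i - t by omega),
          MvPolynomial.rename_X]
        congr 1
        omega
    rw [hfun]

lemma truncAt_step {g : MvPolynomial ℕ ℤ} {r i : ℕ} (c : ℤ) (k : ℕ) (hir : i < r) :
    truncAt (g * MvPolynomial.X r + MvPolynomial.C c) i k
      = truncAt g i k * MvPolynomial.X (r - 1) + MvPolynomial.C c := by
  rw [truncAt_eq, map_add, map_mul, MvPolynomial.aeval_X, MvPolynomial.aeval_C,
    MvPolynomial.algebraMap_eq, ← truncAt_eq]
  congr 2
  show truncFun i k r = _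
  rw [truncFun, if_neg (by omega), if_neg (by omega)]

lemma truncAt_base (a c : ℤ) (k : ℕ) :
    truncAt (MvPolynomial.C a * MvPolynomial.X 0 + MvPolynomial.C c) 0 k
      = MvPolynomial.C (a * 3 ^ k + c) := by
  rw [truncAt_eq, map_add, map_mul, MvPolynomial.aeval_X, MvPolynomial.aeval_C,
    MvPolynomial.aeval_C, MvPolynomial.algebraMap_eq]
  show MvPolynomial.C a * truncFun 0 k 0 + _ = _
  rw [truncFun, if_neg (by omega), if_pos rfl, ← MvPolynomial.C_mul, ← MvPolynomial.C_add]

lemma skipEmb_inj (i : ℕ) : Function.Injective (skipEmb i) := by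
  intro a b h
  unfold skipEmb at h
  split_ifs at h <;> omega

/-- Deleting the `i`-th variable from a monomial. -/
noncomputable def deleteVar (i : ℕ) (m : ℕ →₀ ℕ) : ℕ →₀ ℕ :=
  Finsupp.comapDomain (skipEmb i) m ((skipEmb_inj i).injOn)

lemma deleteVar_apply (i : ℕ) (m : ℕ →₀ ℕ) (j : ℕ) : deleteVar i m j = m (skipEmb i j) :=
  Finsupp.comapDomain_apply _ _ _ _

lemma deleteVar_add (i : ℕ) (m m' : ℕ →₀ ℕ) :
    deleteVar i (m + m') = deleteVar i m + deleteVar i m' := by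
  ext j
  rw [Finsupp.add_apply, deleteVar_apply, deleteVar_apply, deleteVar_apply, Finsupp.add_apply]

lemma skipEmb_ne (i j : ℕ) : skipEmb i j ≠ i := by
  unfold skipEmb
  split_ifs <;> omega

lemma aeval_trunc_monomial (i k : ℕ) (m : ℕ →₀ ℕ) (c : ℤ) :
    MvPolynomial.aeval (truncFun i k) (MvPolynomial.monomial m c)
      = MvPolynomial.monomial (deleteVar i m) (c * 3 ^ (k * m i)) := by
  classical
  induction m using Finsupp.induction with
  | zero =>
    have h0 : deleteVar i 0 = 0 := by
      ext j; rw [deleteVar_apply]; rfl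
    simp [h0, MvPolynomial.aeval_monomial]
  | single_add a n m han hn ih =>
    have hsplit : MvPolynomial.monomial (Finsupp.single a n + m) c
        = MvPolynomial.monomial (Finsupp.single a n) (1 : ℤ) * MvPolynomial.monomial m c := by
      rw [MvPolynomial.monomial_mul, one_mul]
    rw [hsplit, map_mul, ih]
    have hbase : MvPolynomial.aeval (truncFun i k) (MvPolynomial.monomial (Finsupp.single a n) (1 : ℤ))
        = truncFun i k a ^ n := by
      rw [MvPolynomial.aeval_monomial, Finsupp.prod_single_index (h := fun j e => truncFun i k j ^ e) (pow_zero _),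
        map_one, one_mul]
    rcases lt_trichotomy a i with h | h | h
    · have hdel : deleteVar i (Finsupp.single a n) = Finsupp.single a n := by
        ext j
        rw [deleteVar_apply, Finsupp.single_apply, Finsupp.single_apply]
        unfold skipEmb
        split_ifs <;> omega
      have hi : (Finsupp.single a n + m : ℕ →₀ ℕ) i = m i := by
        rw [Finsupp.add_apply, Finsupp.single_apply, if_neg (by omega)]
        omega
      rw [hbase, truncFun, if_pos h, MvPolynomial.X_pow_eq_monomial,
        MvPolynomial.monomial_mul, one_mul, deleteVar_add, hdel, hi]
    · have hdel : deleteVar i (Finsupp.single a n) = 0 := by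
        ext j
        rw [deleteVar_apply, Finsupp.single_apply, if_neg (by have := skipEmb_ne i j; omega)]
        rfl
      have hi : (Finsupp.single a n + m : ℕ →₀ ℕ) i = n + m i := by
        rw [Finsupp.add_apply, Finsupp.single_apply, if_pos (by omega)]
      rw [hbase, truncFun, if_neg (by omega), if_pos (by omega), ← map_pow,
        MvPolynomial.C_apply, MvPolynomial.monomial_mul, deleteVar_add, hdel, hi, zero_add]
      congr 1
      have hexp : k * (n + m i) = k * n + k * m i := by ring
      rw [hexp, pow_add, ← pow_mul]
      ring
    · have hdel : deleteVar i (Finsupp.single a n) = Finsupp.single (a - 1) n := by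
        ext j
        rw [deleteVar_apply, Finsupp.single_apply, Finsupp.single_apply]
        unfold skipEmb
        split_ifs <;> omega
      have hi : (Finsupp.single a n + m : ℕ →₀ ℕ) i = m i := by
        rw [Finsupp.add_apply, Finsupp.single_apply, if_neg (by omega)]
        omega
      rw [hbase, truncFun, if_neg (by omega), if_neg (by omega), MvPolynomial.X_pow_eq_monomial,
        MvPolynomial.monomial_mul, one_mul, deleteVar_add, hdel, hi]

lemma coeff_truncAt (f : MvPolynomial ℕ ℤ) (i k : ℕ) (m' : ℕ →₀ ℕ) :
    MvPolynomial.coeff m' (truncAt f i k)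
      = ∑ m ∈ f.support,
          (if deleteVar i m = m' then MvPolynomial.coeff m f * 3 ^ (k * m i) else 0) := by
  classical
  conv_lhs => rw [truncAt_eq, f.as_sum, map_sum]
  rw [MvPolynomial.coeff_sum]
  apply Finset.sum_congr rfl
  intro m _
  rw [aeval_trunc_monomial, MvPolynomial.coeff_monomial]

lemma truncAt_support_sub {f : MvPolynomial ℕ ℤ} {i k : ℕ} {m' : ℕ →₀ ℕ}
    (h : MvPolynomial.coeff m' (truncAt f i k) ≠ 0) :
    ∃ m, MvPolynomial.coeff m f ≠ 0 ∧ deleteVar i m = m' := by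
  classical
  rw [coeff_truncAt] at h
  obtain ⟨m, hm, hne⟩ := Finset.exists_ne_zero_of_sum_ne_zero h
  refine ⟨m, MvPolynomial.mem_support_iff.1 hm, ?_⟩
  by_contra hc
  rw [if_neg hc] at hne
  exact hne rfl

lemma truncAt_support_mem {f : MvPolynomial ℕ ℤ}
    (hnn : ∀ m, 0 ≤ MvPolynomial.coeff m f) {m : ℕ →₀ ℕ}
    (hm : MvPolynomial.coeff m f ≠ 0) (i k : ℕ) :
    0 < MvPolynomial.coeff (deleteVar i m) (truncAt f i k) := by
  classical
  rw [coeff_truncAt]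
  apply Finset.sum_pos'
  · intro m₀ _
    split_ifs
    · exact mul_nonneg (hnn m₀) (by positivity)
    · exact le_refl 0
  · refine ⟨m, MvPolynomial.mem_support_iff.2 hm, ?_⟩
    rw [if_pos rfl]
    exact mul_pos (lt_of_le_of_ne (hnn m) (Ne.symm hm)) (by positivity)

lemma nestLe_truncAt {f : MvPolynomial ℕ ℤ}
    (hnn : ∀ m, 0 ≤ MvPolynomial.coeff m f) (i k j j' : ℕ) :
    NestLe (truncAt f i k) j j' ↔ NestLe f (skipEmb i j) (skipEmb i j') := by
  constructor
  · intro h m hm hmj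
    have h2 := truncAt_support_mem hnn (MvPolynomial.mem_support_iff.1 hm) i k
    have := h (deleteVar i m) (MvPolynomial.mem_support_iff.2 h2.ne')
      (by rw [deleteVar_apply]; exact hmj)
    rwa [deleteVar_apply] at this
  · intro h m' hm' hm'j
    obtain ⟨m, hm, rfl⟩ := truncAt_support_sub (MvPolynomial.mem_support_iff.1 hm')
    rw [deleteVar_apply] at hm'j ⊢
    exact h m (MvPolynomial.mem_support_iff.2 hm) hm'j

section MulTransfer

variable {p q : MvPolynomial ℕ ℤ} {t s : ℕ}

lemma mul_proj_left (F₁ : LDPFacts t p) {m : ℕ →₀ ℕ}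
    (hm : MvPolynomial.coeff m (p * MvPolynomial.rename (· + t) q) ≠ 0) :
    ∃ a, MvPolynomial.coeff a p ≠ 0 ∧ ∀ j < t, m j = a j := by
  obtain ⟨a, b, ha, hb, rfl⟩ := mul_coeff_decomp hm
  refine ⟨a, ha, fun j hj => ?_⟩
  rw [Finsupp.add_apply, mapDomain_addt_apply, if_neg (by omega), add_zero]

lemma mul_proj_right {m : ℕ →₀ ℕ}
    (hm : MvPolynomial.coeff m (p * MvPolynomial.rename (· + t) q) ≠ 0)
    (F₁ : LDPFacts t p) :
    ∃ b, MvPolynomial.coeff b q ≠ 0 ∧ ∀ j, m (j + t) = b j := by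
  obtain ⟨a, b, ha, hb, rfl⟩ := mul_coeff_decomp hm
  refine ⟨b, hb, fun j => ?_⟩
  rw [Finsupp.add_apply, mapDomain_addt_apply, if_pos (by omega), F₁.varsLt a ha (j + t) (by omega),
    zero_add, Nat.add_sub_cancel]

lemma mul_emb_left (F₁ : LDPFacts t p) (F₂ : LDPFacts s q) {a : ℕ →₀ ℕ}
    (ha : MvPolynomial.coeff a p ≠ 0) :
    ∃ m, MvPolynomial.coeff m (p * MvPolynomial.rename (· + t) q) ≠ 0 ∧
      (∀ j < t, m j = a j) ∧ (∀ j, t ≤ j → m j = 0) := by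
  refine ⟨a + Finsupp.mapDomain (· + t) 0, ?_, ?_, ?_⟩
  · rw [coeff_mul_rename p q t F₁.varsLt a 0 (F₁.varsLt a ha)]
    exact mul_ne_zero ha F₂.constPos.ne'
  · intro j _
    simp
  · intro j hj
    simp [F₁.varsLt a ha j hj]

lemma mul_emb_right (F₁ : LDPFacts t p) (F₂ : LDPFacts s q) {b : ℕ →₀ ℕ}
    (hb : MvPolynomial.coeff b q ≠ 0) :
    ∃ m, MvPolynomial.coeff m (p * MvPolynomial.rename (· + t) q) ≠ 0 ∧
      (∀ j, m (j + t) = b j) ∧ (∀ j < t, m j = 0) := by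
  refine ⟨0 + Finsupp.mapDomain (· + t) b, ?_, ?_, ?_⟩
  · rw [coeff_mul_rename p q t F₁.varsLt 0 b (fun j _ => rfl)]
    exact mul_ne_zero F₁.constPos.ne' hb
  · intro j
    rw [Finsupp.add_apply, Finsupp.zero_apply, zero_add, mapDomain_addt_apply,
      if_pos (by omega), Nat.add_sub_cancel]
  · intro j hj
    rw [Finsupp.add_apply, Finsupp.zero_apply, zero_add, mapDomain_addt_apply, if_neg (by omega)]

lemma nestLe_mul_left (F₁ : LDPFacts t p) (F₂ : LDPFacts s q) {j j' : ℕ}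
    (hj : j < t) (hj' : j' < t) :
    NestLe (p * MvPolynomial.rename (· + t) q) j j' ↔ NestLe p j j' := by
  constructor
  · intro h a ha haj
    obtain ⟨m, hm, he, _⟩ := mul_emb_left F₁ F₂ (MvPolynomial.mem_support_iff.1 ha)
    have := h m (MvPolynomial.mem_support_iff.2 hm) (by rw [he j hj]; exact haj)
    rwa [he j' hj'] at this
  · intro h m hm hmj
    obtain ⟨a, ha, he⟩ := mul_proj_left F₁ (MvPolynomial.mem_support_iff.1 hm)
    have := h a (MvPolynomial.mem_support_iff.2 ha) (by rw [← he j hj]; exact hmj)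
    rw [he j' hj']
    exact this

lemma nestLe_mul_right (F₁ : LDPFacts t p) (F₂ : LDPFacts s q) {j j' : ℕ} :
    NestLe (p * MvPolynomial.rename (· + t) q) (j + t) (j' + t) ↔ NestLe q j j' := by
  constructor
  · intro h b hb hbj
    obtain ⟨m, hm, he, _⟩ := mul_emb_right F₁ F₂ (MvPolynomial.mem_support_iff.1 hb)
    have := h m (MvPolynomial.mem_support_iff.2 hm) (by rw [he j]; exact hbj)
    rwa [he j'] at this
  · intro h m hm hmj
    obtain ⟨b, hb, he⟩ := mul_proj_right (MvPolynomial.mem_support_iff.1 hm) F₁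
    have := h b (MvPolynomial.mem_support_iff.2 hb) (by rw [← he j]; exact hmj)
    rw [he j']
    exact this

end MulTransfer

lemma leadCoeff_step (g : MvPolynomial ℕ ℤ) (c : ℤ) (r : ℕ) :
    leadCoeff (r + 1) (g * MvPolynomial.X r + MvPolynomial.C c) = leadCoeff r g := by
  rw [leadCoeff_eq, fullMon_succ, coeff_step]
  have h1 : (fullMon r + Finsupp.single r 1 : ℕ →₀ ℕ) r ≠ 0 := by
    rw [Finsupp.add_apply, fullMon_apply, Finsupp.single_apply]
    simp
  have h2 : fullMon r + Finsupp.single r 1 ≠ 0 := by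
    intro hh
    have := congrArg (fun v : ℕ →₀ ℕ => v r) hh
    simp only [Finsupp.coe_zero, Pi.zero_apply] at this
    exact h1 this
  rw [if_pos h1, if_neg h2, add_zero, add_tsub_cancel_right, leadCoeff_eq]

lemma ldp_trunc {r : ℕ} {f : MvPolynomial ℕ ℤ} {C : ℕ} (h : LDP r f C) :
    ∀ i, IsMinVar r f i → ∀ k,
      LDP (r - 1) (truncAt f i k) (C + 3 * k) ∧
      3 ^ k * leadCoeff r f < leadCoeff (r - 1) (truncAt f i k) := by
  induction h with
  | const k C hk hC =>
    intro i hi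
    exact absurd hi.1 (by omega)
  | mul h₁ h₂ ih₁ ih₂ =>
    rename_i r₁ r₂ f₁ f₂ C₁ C₂
    intro i hi k
    have F₁ := ldp_facts h₁
    have F₂ := ldp_facts h₂
    by_cases hir : i < r₁
    · -- the minimal variable lives in `f₁`
      have hmin : IsMinVar r₁ f₁ i := by
        refine ⟨hir, fun j hj hji => ?_⟩
        have h1 : NestLe (f₁ * MvPolynomial.rename (· + r₁) f₂) j i :=
          (nestLe_mul_left F₁ F₂ hj hir).2 hji
        have h2 := hi.2 j (by omega) h1
        exact (nestLe_mul_left F₁ F₂ hir hj).1 h2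
      obtain ⟨hL, hlt⟩ := ih₁ i hmin k
      have T := truncAt_mul_left (p := f₁) (q := f₂) k hir
      constructor
      · rw [T, show r₁ + r₂ - 1 = (r₁ - 1) + r₂ from by omega,
          show C₁ + C₂ + 3 * k = (C₁ + 3 * k) + C₂ from by omega]
        exact LDP.mul hL h₂
      · rw [T, show r₁ + r₂ - 1 = (r₁ - 1) + r₂ from by omega,
          leadCoeff_mul_rename _ _ _ r₂ (ldp_facts hL).varsLt,
          leadCoeff_mul_rename _ _ _ r₂ F₁.varsLt]
        calc 3 ^ k * (leadCoeff r₁ f₁ * leadCoeff r₂ f₂)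
            = (3 ^ k * leadCoeff r₁ f₁) * leadCoeff r₂ f₂ := by ring
          _ < leadCoeff (r₁ - 1) (truncAt f₁ i k) * leadCoeff r₂ f₂ :=
              mul_lt_mul_of_pos_right hlt F₂.leadPos
    · -- the minimal variable lives in `f₂`
      have hi2 : i - r₁ < r₂ := by have := hi.1; omega
      have hieq : (i - r₁) + r₁ = i := by omega
      have hmin : IsMinVar r₂ f₂ (i - r₁) := by
        refine ⟨hi2, fun j hj hji => ?_⟩
        have h1 : NestLe (f₁ * MvPolynomial.rename (· + r₁) f₂) (j + r₁) ((i - r₁) + r₁) :=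
          (nestLe_mul_right F₁ F₂).2 hji
        rw [hieq] at h1
        have h2 := hi.2 (j + r₁) (by omega) h1
        rw [← hieq] at h2
        exact (nestLe_mul_right F₁ F₂).1 h2
      obtain ⟨hL, hlt⟩ := ih₂ _ hmin k
      have T := truncAt_mul_right (p := f₁) (q := f₂) k (by omega : r₁ ≤ i) F₁.varsLt
      constructor
      · rw [T, show r₁ + r₂ - 1 = r₁ + (r₂ - 1) from by omega,
          show C₁ + C₂ + 3 * k = C₁ + (C₂ + 3 * k) from by omega]
        exact LDP.mul h₁ hL
      · rw [T, show r₁ + r₂ - 1 = r₁ + (r₂ - 1) from by omega,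
          leadCoeff_mul_rename _ _ _ (r₂ - 1) F₁.varsLt,
          leadCoeff_mul_rename _ _ _ r₂ F₁.varsLt]
        calc 3 ^ k * (leadCoeff r₁ f₁ * leadCoeff r₂ f₂)
            = leadCoeff r₁ f₁ * (3 ^ k * leadCoeff r₂ f₂) := by ring
          _ < leadCoeff r₁ f₁ * leadCoeff (r₂ - 1) (truncAt f₂ (i - r₁) k) :=
              mul_lt_mul_of_pos_left hlt F₁.leadPos
  | step c D hc hD hg ihg =>
    rename_i r g Cg
    intro i hi k
    have Fg := ldp_facts hg
    -- membership facts for the support of `g * X r + C c`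
    have hsupp : ∀ m : ℕ →₀ ℕ,
        MvPolynomial.coeff m (g * MvPolynomial.X r + MvPolynomial.C (c : ℤ)) ≠ 0 → m ≠ 0 →
        m r ≠ 0 ∧ MvPolynomial.coeff (m - Finsupp.single r 1) g ≠ 0 := by
      intro m hm h0
      rw [coeff_step, if_neg h0, add_zero] at hm
      split_ifs at hm with h1
      · exact ⟨h1, hm⟩
      · exact absurd rfl hm
    have hsupp2 : ∀ m : ℕ →₀ ℕ, MvPolynomial.coeff m g ≠ 0 →
        MvPolynomial.coeff (m + Finsupp.single r 1)
          (g * MvPolynomial.X r + MvPolynomial.C (c : ℤ)) ≠ 0 := by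
      intro m hm
      have h1 : (m + Finsupp.single r 1 : ℕ →₀ ℕ) r ≠ 0 := by simp
      have h2 : m + Finsupp.single r 1 ≠ 0 := by
        intro hh
        have := congrArg (fun v : ℕ →₀ ℕ => v r) hh
        simp at this
      rw [coeff_step, if_pos h1, if_neg h2, add_zero, add_tsub_cancel_right]
      exact hm
    by_cases hr : r = 0
    · -- base case : f = a·x₀ + c
      subst hr
      obtain ⟨a, ha, rfl, hcpx⟩ := ldp_zero hg
      have hi0 : i = 0 := by have := hi.1; omega
      subst hi0
      have T := truncAt_base (a : ℤ) (c : ℤ) k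
      have hcast : (MvPolynomial.C ((a : ℤ) * 3 ^ k + (c : ℤ)) : MvPolynomial ℕ ℤ)
          = MvPolynomial.C (((a * 3 ^ k + c : ℕ) : ℤ)) := by push_cast; ring_nf
      constructor
      · simp only [Nat.add_sub_cancel]
        rw [T, hcast]
        refine LDP.const _ _ (by positivity) ?_
        calc cpx (a * 3 ^ k + c) ≤ cpx (a * 3 ^ k) + cpx c :=
              cpx_add_le (by positivity) hc
          _ ≤ (cpx a + 3 * k) + cpx c := by
              have := cpx_mul_pow3 ha k; omega
          _ ≤ Cg + D + 3 * k := by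
              have := cpx_mem hc; omega
      · simp only [Nat.add_sub_cancel]
        rw [T, leadCoeff_step, leadCoeff_eq, leadCoeff_eq,
          fullMon_zero, MvPolynomial.coeff_C, if_pos rfl, MvPolynomial.coeff_C, if_pos rfl]
        have hc' : (0 : ℤ) < (c : ℤ) := by exact_mod_cast hc
        have : (3 : ℤ) ^ k * (a : ℤ) = (a : ℤ) * 3 ^ k := by ring
        rw [this]
        linarith
    · -- inductive case : r ≥ 1
      have hir : i < r := by
        rcases Nat.lt_or_ge i r with h | h
        · exact h
        · exfalso
          have hieq : i = r := by have := hi.1; omega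
          subst hieq
          have her : MvPolynomial.coeff (Finsupp.single i 1)
              (g * MvPolynomial.X i + MvPolynomial.C (c : ℤ)) ≠ 0 := by
            rw [coeff_step, if_pos (by simp), if_neg (by simp), add_zero, tsub_self]
            exact Fg.constPos.ne'
          have hnest : NestLe (g * MvPolynomial.X i + MvPolynomial.C (c : ℤ)) 0 i := by
            intro m hm hm0
            exact (hsupp m (MvPolynomial.mem_support_iff.1 hm)
              (fun hh => hm0 (by simp [hh]))).1
          have := hi.2 0 (by omega) hnest (Finsupp.single i 1)
            (MvPolynomial.mem_support_iff.2 her) (by simp)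
          rw [Finsupp.single_apply, if_neg (by omega)] at this
          exact this rfl
      -- transfer of the nesting order between `f` and `g`
      have htrans : ∀ x y, x < r → y < r →
          (NestLe g x y ↔ NestLe (g * MvPolynomial.X r + MvPolynomial.C (c : ℤ)) x y) := by
        intro x y hx hy
        constructor
        · intro h m hm hmx
          have h0 : m ≠ 0 := fun hh => hmx (by simp [hh])
          obtain ⟨hmr, hm'⟩ := hsupp m (MvPolynomial.mem_support_iff.1 hm) h0
          have hx' : (m - Finsupp.single r 1 : ℕ →₀ ℕ) x = m x := by
            rw [Finsupp.tsub_apply, Finsupp.single_apply, if_neg (by omega)]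
            omega
          have hy' : (m - Finsupp.single r 1 : ℕ →₀ ℕ) y = m y := by
            rw [Finsupp.tsub_apply, Finsupp.single_apply, if_neg (by omega)]
            omega
          have := h (m - Finsupp.single r 1) (MvPolynomial.mem_support_iff.2 hm')
            (by rw [hx']; exact hmx)
          rwa [hy'] at this
        · intro h m hm hmx
          have hx' : (m + Finsupp.single r 1 : ℕ →₀ ℕ) x = m x := by
            rw [Finsupp.add_apply, Finsupp.single_apply, if_neg (by omega), add_zero]
          have hy' : (m + Finsupp.single r 1 : ℕ →₀ ℕ) y = m y := by
            rw [Finsupp.add_apply, Finsupp.single_apply, if_neg (by omega), add_zero]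
          have := h (m + Finsupp.single r 1)
            (MvPolynomial.mem_support_iff.2 (hsupp2 m (MvPolynomial.mem_support_iff.1 hm)))
            (by rw [hx']; exact hmx)
          rwa [hy'] at this
      have hming : IsMinVar r g i := by
        refine ⟨hir, fun j hj hji => ?_⟩
        have h1 := (htrans j i hj hir).1 hji
        have h2 := hi.2 j (by omega) h1
        exact (htrans i j hir hj).2 h2
      obtain ⟨hL, hlt⟩ := ihg i hming k
      have T := truncAt_step (g := g) (c : ℤ) k hir
      constructor
      · rw [show r + 1 - 1 = (r - 1) + 1 from by omega, T,
          show Cg + D + 3 * k = (Cg + 3 * k) + D from by omega]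
        exact LDP.step c D hc hD hL
      · have e : r - 1 + 1 = r := by omega
        have hR := leadCoeff_step (truncAt g i k) (c : ℤ) (r - 1)
        rw [e] at hR
        simp only [Nat.add_sub_cancel]
        rw [T, hR, leadCoeff_step]
        exact hlt

lemma pairDft_lt {r : ℕ} {f g : MvPolynomial ℕ ℤ} {C k : ℕ}
    (hA : 0 < leadCoeff (r + 1) f)
    (hlt : 3 ^ k * leadCoeff (r + 1) f < leadCoeff r g) :
    pairDft r g (C + 3 * k) < pairDft (r + 1) f C := by
  unfold pairDft
  have hA' : (0 : ℝ) < ((leadCoeff (r + 1) f : ℤ) : ℝ) := by exact_mod_cast hA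
  have hpos : (0 : ℝ) < (3 : ℝ) ^ k * ((leadCoeff (r + 1) f : ℤ) : ℝ) := by positivity
  have hlt' : (3 : ℝ) ^ k * ((leadCoeff (r + 1) f : ℤ) : ℝ) < ((leadCoeff r g : ℤ) : ℝ) := by
    exact_mod_cast hlt
  have hlog := Real.logb_lt_logb (b := 3) (by norm_num) hpos hlt'
  rw [Real.logb_mul (by positivity) hA'.ne', Real.logb_pow,
    Real.logb_self_eq_one (by norm_num), mul_one] at hlog
  push_cast
  linarith

lemma eval_aeval (v : ℕ → ℤ) (φ : ℕ → MvPolynomial ℕ ℤ) (f : MvPolynomial ℕ ℤ) :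
    MvPolynomial.eval v (MvPolynomial.aeval φ f)
      = MvPolynomial.eval (fun j => MvPolynomial.eval v (φ j)) f := by
  induction f using MvPolynomial.induction_on with
  | C a => simp
  | add p q hp hq => simp only [map_add, hp, hq]
  | mul_X p n hp => simp only [map_mul, hp, MvPolynomial.aeval_X, MvPolynomial.eval_X]

lemma eval3_truncAt (r : ℕ) (f : MvPolynomial ℕ ℤ) (i k : ℕ) (hi : i < r + 1) (kk : ℕ → ℕ) :
    eval3 r (truncAt f i k) kk
      = eval3 (r + 1) f (fun j => if j < i then kk j else if j = i then k else kk (j - 1)) := by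
  rw [eval3, eval3, truncAt_eq, eval_aeval]
  have hfun : (fun j => MvPolynomial.eval (fun l => if l < r then (3 : ℤ) ^ kk l else 1)
        (truncFun i k j))
      = fun j => if j < r + 1
          then (3 : ℤ) ^ (if j < i then kk j else if j = i then k else kk (j - 1)) else 1 := by
    funext j
    show MvPolynomial.eval _ (truncFun i k j) = _
    rcases lt_trichotomy j i with h | h | h
    · rw [truncFun, if_pos h, MvPolynomial.eval_X]
      rw [if_pos (by omega : j < r), if_pos (by omega : j < r + 1), if_pos h]
    · rw [truncFun, if_neg (by omega), if_pos h, MvPolynomial.eval_C]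
      rw [if_pos (by omega : j < r + 1), if_neg (by omega : ¬ j < i), if_pos h]
    · rw [truncFun, if_neg (by omega), if_neg (by omega), MvPolynomial.eval_X]
      rw [show (if j < r + 1
            then (3:ℤ) ^ (if j < i then kk j else if j = i then k else kk (j-1)) else 1)
        = if j < r + 1 then (3:ℤ) ^ (kk (j - 1)) else 1 from by
          by_cases hc : j < r + 1
          · rw [if_pos hc, if_pos hc, if_neg (by omega : ¬ j < i), if_neg (by omega : ¬ j = i)]
          · rw [if_neg hc, if_neg hc]]
      by_cases hc : j < r + 1
      · rw [if_pos (by omega : j - 1 < r), if_pos hc]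
      · rw [if_neg (by omega : ¬ j - 1 < r), if_neg hc]
  rw [hfun]

lemma sum_insert_skip (r i k : ℕ) (hi : i < r + 1) (kk : ℕ → ℕ) :
    (∑ j ∈ Finset.range (r + 1),
        (if j < i then kk j else if j = i then k else kk (j - 1)))
      = k + ∑ j ∈ Finset.range r, kk j := by
  classical
  set F : ℕ → ℕ := fun j => if j < i then kk j else if j = i then k else kk (j - 1) with hF
  have himg : (Finset.range r).image (skipEmb i) = (Finset.range (r + 1)).erase i := by
    ext a
    simp only [Finset.mem_image, Finset.mem_erase, Finset.mem_range]
    constructor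
    · rintro ⟨j, hj, rfl⟩
      unfold skipEmb
      constructor
      · split_ifs <;> omega
      · split_ifs <;> omega
    · rintro ⟨hai, har⟩
      rcases Nat.lt_or_ge a i with h | h
      · exact ⟨a, by omega, by unfold skipEmb; rw [if_pos h]⟩
      · refine ⟨a - 1, by omega, ?_⟩
        unfold skipEmb
        rw [if_neg (by omega)]
        omega
  have h1 : F i + ∑ j ∈ (Finset.range (r + 1)).erase i, F j = ∑ j ∈ Finset.range (r + 1), F j :=
    Finset.add_sum_erase _ F (Finset.mem_range.2 hi)
  have h2 : ∑ j ∈ (Finset.range r).image (skipEmb i), F j = ∑ j ∈ Finset.range r, F (skipEmb i j) :=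
    Finset.sum_image (fun x _ y _ hxy => skipEmb_inj i hxy)
  have h3 : ∀ j ∈ Finset.range r, F (skipEmb i j) = kk j := by
    intro j _
    rcases Nat.lt_or_ge j i with h | h
    · have hs : skipEmb i j = j := by unfold skipEmb; rw [if_pos h]
      rw [hs]
      simp only [hF]
      rw [if_pos h]
    · have hs : skipEmb i j = j + 1 := by unfold skipEmb; rw [if_neg (by omega)]
      rw [hs]
      simp only [hF]
      rw [if_neg (by omega : ¬ j + 1 < i), if_neg (by omega : ¬ j + 1 = i), Nat.add_sub_cancel]
  have hFi : F i = k := by simp [hF]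
  rw [← h1, hFi]
  congr 1
  rw [← himg, h2]
  exact Finset.sum_congr rfl h3

lemma dftF_truncAt (r : ℕ) (f : MvPolynomial ℕ ℤ) (C : ℕ) (i k : ℕ) (hi : i < r + 1)
    (kk : ℕ → ℕ) :
    dftF r (truncAt f i k) (C + 3 * k) kk
      = dftF (r + 1) f C (fun j => if j < i then kk j else if j = i then k else kk (j - 1)) := by
  unfold dftF
  rw [eval3_truncAt r f i k hi kk]
  have hs : (∑ j ∈ Finset.range (r + 1),
        (((if j < i then kk j else if j = i then k else kk (j - 1)) : ℕ) : ℝ))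
      = (k : ℝ) + ∑ j ∈ Finset.range r, (kk j : ℝ) := by
    rw [← Nat.cast_sum, ← Nat.cast_sum, ← Nat.cast_add, sum_insert_skip r i k hi kk]
  rw [hs]
  push_cast
  ring
/-- Direct truncation. Substituting `3^k` into a minimal
variable of a low-defect pair gives a low-defect pair, with bigger leading
coefficient, smaller defect, restricted nesting order, and matching `δ_{f,C}`. -/
theorem direct_truncation (r : ℕ) (f : MvPolynomial ℕ ℤ) (C : ℕ) (hf : LDP (r + 1) f C)
    (i : ℕ) (hi : IsMinVar (r + 1) f i) (k : ℕ) :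
    LDP r (truncAt f i k) (C + 3 * k) ∧
    leadCoeff (r + 1) f * 3 ^ k < leadCoeff r (truncAt f i k) ∧
    pairDft r (truncAt f i k) (C + 3 * k) < pairDft (r + 1) f C ∧
    (∀ j j', j < r → j' < r →
      (NestLe (truncAt f i k) j j' ↔ NestLe f (skipEmb i j) (skipEmb i j'))) ∧
    (∀ kk : ℕ → ℕ, dftF r (truncAt f i k) (C + 3 * k) kk =
      dftF (r + 1) f C (fun j => if j < i then kk j else if j = i then k else kk (j - 1))) := by
  obtain ⟨h1, h2⟩ : LDP (r + 1 - 1) (truncAt f i k) (C + 3 * k) ∧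
      3 ^ k * leadCoeff (r + 1) f < leadCoeff (r + 1 - 1) (truncAt f i k) := ldp_trunc hf i hi k
  simp only [Nat.add_sub_cancel] at h1 h2
  have F := ldp_facts hf
  refine ⟨h1, by rw [mul_comm]; exact h2, pairDft_lt F.leadPos h2, ?_, ?_⟩
  · intro j j' _ _
    exact nestLe_truncAt F.coeffNonneg i k j j'
  · intro kk
    exact dftF_truncAt r f C i k hi.1 kk
end
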